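/- arXiv:1904.02337 — 4 statements merged into one kernel-verified Lean document; each statement's English description precedes it below -/
import Mathlib

section
/- Fix integers d ≥ 1, n ≥ 2 and dyadic lengths l > s. Let E ⊆ [0,1)^d be a nonempty union of cubes of B_l^d, and let G ⊆ ℝ^{dn} be a nonempty union of cubes of B_s^{dn} such that (l/s)^d ≤ #B_s^{dn}(G) ≤ (1/2)(l/s)^{dn}. Then there exist a dyadic length r with s ≤ r ≤ l and Q ≤ r ≤ 4Q, where Q = (l^{−d} s^{dn} · #B_s^{dn}(G))^{1/(d(n−1))}, and a nonempty set F ⊆ E that is a union of cubes of B_s^d, satisfying: (1) Avoidance: for any pairwise distinct cubes J_1, …, J_n ∈ B_s^d(F), the cube J_1 × ⋯ × J_n does not belong to B_s^{dn}(G); (2) Non-concentration: every cube I' ∈ B_r^d(E) contains at most one cube of B_s^d(F); (3) Large size: for every I ∈ B_l^d(E), #B_s^d(F ∩ I) ≥ (1/2)(l/r)^d. -/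
open Filter Set

noncomputable section

/-- A dyadic length: a real number of the form `2 ^ (-k)` for a natural number `k`. -/
def IsDyadicLength (l : ℝ) : Prop := ∃ k : ℕ, l = (2 : ℝ) ^ (-(k : ℤ))

/-- The half-open dyadic cube of sidelength `l` with corner `l • m`. -/
def dyadicCube {ι : Type*} (l : ℝ) (m : ι → ℤ) : Set (ι → ℝ) :=
  {x | ∀ i, l * (m i : ℝ) ≤ x i ∧ x i < l * ((m i : ℝ) + 1)}

/-- The (indices of the) cubes of `B_l` that intersect `E`. -/
def cubesMeeting {ι : Type*} (l : ℝ) (E : Set (ι → ℝ)) : Set (ι → ℤ) :=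
  {m | (dyadicCube l m ∩ E).Nonempty}

/-- `#B_l(E)`, the number of cubes of sidelength `l` meeting `E`. -/
def cubeCount {ι : Type*} (l : ℝ) (E : Set (ι → ℝ)) : ℕ :=
  (cubesMeeting l E).ncard

/-- `E` is a union of cubes of `B_l`. -/
def IsCubeUnion {ι : Type*} (l : ℝ) (E : Set (ι → ℝ)) : Prop :=
  ∃ S : Set (ι → ℤ), E = ⋃ m ∈ S, dyadicCube l m

/-- Lower Minkowski dimension, computed along dyadic scales. -/
def lowerMinkDim {ι : Type*} (Z : Set (ι → ℝ)) : ℝ :=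
  Filter.atTop.liminf fun k : ℕ =>
    Real.log (cubeCount ((2 : ℝ) ^ (-(k : ℤ))) Z) / (k * Real.log 2)

/-- The unit cube `[0,1)^d`. -/
def unitCube (d : ℕ) : Set (Fin d → ℝ) := {x | ∀ i, x i ∈ Set.Ico (0 : ℝ) 1}

/-- `X^n`, viewed inside `ℝ^{dn} = (Fin n × Fin d → ℝ)`. -/
def nthPower {d n : ℕ} (X : Set (Fin d → ℝ)) : Set (Fin n × Fin d → ℝ) :=
  {y | ∀ j, (fun i => y (j, i)) ∈ X}

/-- The point `(x_1, …, x_n) ∈ ℝ^{dn}` built from `x_1, …, x_n ∈ ℝ^d`. -/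
def tuple {d n : ℕ} (x : Fin n → Fin d → ℝ) : Fin n × Fin d → ℝ := fun p => x p.1 p.2

/-- The `j`-th factor of a cube index in `B_l^{dn}`. -/
def cubeRow {d n : ℕ} (M : Fin n × Fin d → ℤ) (j : Fin n) : Fin d → ℤ := fun i => M (j, i)

/-- A cube of `B_l^{dn}` is strongly non-diagonal if its `n` factors are pairwise distinct. -/
def StronglyNonDiagonal {d n : ℕ} (M : Fin n × Fin d → ℤ) : Prop :=
  Function.Injective (cubeRow M)

-- Auxiliary lemmas
-- basic cube lemmas
lemma floor_div_nat' (x : ℝ) (m : ℕ) (hm : 0 < m) : ⌊x / (m:ℝ)⌋ = ⌊x⌋ / (m:ℤ) := by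
  have hm' : (0:ℝ) < (m:ℝ) := by exact_mod_cast hm
  rw [Int.floor_eq_iff]
  constructor
  · rw [le_div_iff₀ hm']
    have h1 : ((⌊x⌋ / (m:ℤ) : ℤ) : ℝ) * (m:ℝ) ≤ ((⌊x⌋ : ℤ) : ℝ) := by
      exact_mod_cast (Int.ediv_mul_le ⌊x⌋ (by positivity : (m:ℤ) ≠ 0))
    exact h1.trans (Int.floor_le x)
  · rw [div_lt_iff₀ hm']
    have h2 : ⌊x⌋ < (⌊x⌋ / (m:ℤ) + 1) * (m:ℤ) :=
      Int.lt_ediv_add_one_mul_self _ (by exact_mod_cast hm)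
    have h3 : x < ((⌊x⌋ / (m:ℤ) + 1 : ℤ):ℝ) * (m:ℝ) := by
      calc x < (⌊x⌋:ℝ) + 1 := Int.lt_floor_add_one x
        _ ≤ ((⌊x⌋ / (m:ℤ) + 1 : ℤ):ℝ) * (m:ℝ) := by exact_mod_cast h2
    calc x < ((⌊x⌋ / (m:ℤ) + 1 : ℤ):ℝ) * (m:ℝ) := h3
      _ = (((⌊x⌋ / (m:ℤ) : ℤ):ℝ) + 1) * (m:ℝ) := by push_cast; ring

lemma div_fact (m a u : ℤ) (hm : 0 < m) (h0 : 0 ≤ u) (h1 : u < m) : (m * a + u) / m = a := by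
  rw [add_comm, Int.add_mul_ediv_left _ _ (by omega : m ≠ 0), Int.ediv_eq_zero_of_lt h0 h1]
  omega

variable {ι : Type*}

lemma mem_dyadicCube_iff {l : ℝ} (hl : 0 < l) (m : ι → ℤ) (x : ι → ℝ) :
    x ∈ dyadicCube l m ↔ ∀ i, ⌊x i / l⌋ = m i := by
  unfold dyadicCube
  simp only [mem_setOf_eq]
  refine forall_congr' fun i => ?_
  rw [Int.floor_eq_iff, le_div_iff₀ hl, div_lt_iff₀ hl]
  constructor
  · rintro ⟨h1, h2⟩; exact ⟨by linarith, by linarith⟩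
  · rintro ⟨h1, h2⟩; exact ⟨by linarith, by linarith⟩

lemma corner_mem_dyadicCube {l : ℝ} (hl : 0 < l) (m : ι → ℤ) :
    (fun i => l * (m i : ℝ)) ∈ dyadicCube l m := by
  intro i
  dsimp only
  refine ⟨le_refl _, ?_⟩
  rw [mul_add, mul_one]
  linarith

lemma dyadicCube_nonempty {l : ℝ} (hl : 0 < l) (m : ι → ℤ) : (dyadicCube l m).Nonempty :=
  ⟨_, corner_mem_dyadicCube hl m⟩

lemma dyadicCube_eq_of_mem {l : ℝ} (hl : 0 < l) {m m' : ι → ℤ} {x : ι → ℝ}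
    (h : x ∈ dyadicCube l m) (h' : x ∈ dyadicCube l m') : m = m' := by
  funext i
  rw [mem_dyadicCube_iff hl] at h h'
  rw [← h i, h' i]

lemma dyadicCube_subset_div {s : ℝ} (hs : 0 < s) (p : ℕ) (hp : 0 < p) (i : ι → ℤ) :
    dyadicCube s i ⊆ dyadicCube (s * p) (fun k => i k / (p:ℤ)) := by
  have hsp : (0:ℝ) < s * p := by positivity
  intro x hx
  rw [mem_dyadicCube_iff hsp]
  rw [mem_dyadicCube_iff hs] at hx
  intro k
  have h1 : x k / (s * p) = (x k / s) / (p:ℝ) := by field_simp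
  have h2 : ⌊x k / (s * p)⌋ = ⌊x k / s⌋ / (p:ℤ) := by rw [h1, floor_div_nat' _ _ hp]
  rw [h2, hx k]

lemma dyadicCube_subset_of_meets {s : ℝ} (hs : 0 < s) (p : ℕ) (hp : 0 < p)
    {i μ : ι → ℤ} (h : (dyadicCube s i ∩ dyadicCube (s * p) μ).Nonempty) :
    dyadicCube s i ⊆ dyadicCube (s * p) μ := by
  have hsp : (0:ℝ) < s * p := by positivity
  obtain ⟨x, hx1, hx2⟩ := h
  have hμ : μ = fun k => i k / (p:ℤ) :=
    dyadicCube_eq_of_mem hsp hx2 (dyadicCube_subset_div hs p hp i hx1)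
  rw [hμ]
  exact dyadicCube_subset_div hs p hp i

lemma cubesMeeting_of_isCubeUnion {l : ℝ} (hl : 0 < l) {E : Set (ι → ℝ)}
    {S : Set (ι → ℤ)} (hE : E = ⋃ m ∈ S, dyadicCube l m) :
    cubesMeeting l E = S := by
  ext m
  constructor
  · rintro ⟨x, hx1, hx2⟩
    rw [hE] at hx2
    simp only [mem_iUnion] at hx2
    obtain ⟨m', hm', hxm'⟩ := hx2
    rwa [dyadicCube_eq_of_mem hl hx1 hxm']
  · intro hm
    refine ⟨_, corner_mem_dyadicCube hl m, ?_⟩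
    rw [hE]
    exact mem_iUnion₂.2 ⟨m, hm, corner_mem_dyadicCube hl m⟩

lemma dyadicCube_subset_of_mem_cubesMeeting {l : ℝ} (hl : 0 < l) {E : Set (ι → ℝ)}
    (hE : IsCubeUnion l E) {m : ι → ℤ} (hm : m ∈ cubesMeeting l E) :
    dyadicCube l m ⊆ E := by
  obtain ⟨S, hS⟩ := hE
  rw [cubesMeeting_of_isCubeUnion hl hS] at hm
  rw [hS]
  exact subset_iUnion₂ (s := fun m _ => dyadicCube l m) m hm

lemma box_ncard (p d : ℕ) :
    ({u : Fin d → ℤ | ∀ k, 0 ≤ u k ∧ u k < p}).ncard = p ^ d := by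
  have h1 : {u : Fin d → ℤ | ∀ k, 0 ≤ u k ∧ u k < p}
      = ↑(Fintype.piFinset (fun _ : Fin d => Finset.Ico (0:ℤ) (p:ℤ))) := by
    ext u; simp [Fintype.mem_piFinset, Finset.mem_Ico]
  rw [h1, Set.ncard_coe_finset, Fintype.card_piFinset]
  simp [Int.card_Ico]

lemma cubesMeeting_unitCube_finite {d : ℕ} {l : ℝ} (hl : 0 < l) {E : Set (Fin d → ℝ)}
    (hE : E ⊆ unitCube d) : (cubesMeeting l E).Finite := by
  apply Set.Finite.subset (Set.Finite.pi (fun _ : Fin d => Set.finite_Icc (0:ℤ) ⌈1/l⌉))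
  rintro m ⟨x, hx1, hx2⟩
  intro i _
  obtain ⟨hxi0, hxi1⟩ := hE hx2 i
  obtain ⟨h1, h2⟩ := hx1 i
  constructor
  · by_contra hneg
    push_neg at hneg
    have : (m i : ℝ) + 1 ≤ 0 := by exact_mod_cast by omega
    nlinarith
  · have h3 : (m i : ℝ) < 1 / l := by
      rw [lt_div_iff₀ hl]
      nlinarith
    have h4 : (m i : ℝ) ≤ (⌈1/l⌉ : ℝ) := le_trans h3.le (Int.le_ceil _)
    exact_mod_cast h4

lemma selection_lemma (d n : ℕ) (hd : 1 ≤ d) (hn : 2 ≤ n)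
    (s : ℝ) (hs : 0 < s) (m p : ℕ) (hm : 0 < m) (hp : 0 < p)
    (E : Set (Fin d → ℝ)) (hE0 : E.Nonempty) (hE1 : E ⊆ unitCube d)
    (hE2 : IsCubeUnion (s * m * p) E)
    (G : Set (Fin n × Fin d → ℝ)) (hT : (cubesMeeting s G).Finite)
    (hkey : 2 * cubeCount s G ≤ m ^ (d * n) * p ^ d) :
    ∃ F : Set (Fin d → ℝ),
      F.Nonempty ∧ F ⊆ E ∧ IsCubeUnion s F ∧
      (∀ mf : Fin n → Fin d → ℤ, (∀ j, mf j ∈ cubesMeeting s F) → Function.Injective mf →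
        (fun q : Fin n × Fin d => mf q.1 q.2) ∉ cubesMeeting s G) ∧
      (∀ m' ∈ cubesMeeting (s * m) E, ∀ m₁ ∈ cubesMeeting s F, ∀ m₂ ∈ cubesMeeting s F,
        dyadicCube s m₁ ⊆ dyadicCube (s * m) m' → dyadicCube s m₂ ⊆ dyadicCube (s * m) m' →
        m₁ = m₂) ∧
      (∀ μ ∈ cubesMeeting (s * m * p) E,
        p ^ d ≤ 2 * cubeCount s (F ∩ dyadicCube (s * m * p) μ)) := by
  classical
  have hmZ : (0:ℤ) < (m:ℤ) := by exact_mod_cast hm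
  have hpZ : (0:ℤ) < (p:ℤ) := by exact_mod_cast hp
  set r : ℝ := s * m with hrdef
  set l : ℝ := s * m * p with hldef
  have hr : 0 < r := by positivity
  have hl : 0 < l := by positivity
  have hRfin : (cubesMeeting r E).Finite := cubesMeeting_unitCube_finite hr hE1
  letI : Fintype ↥(cubesMeeting r E) := hRfin.fintype
  haveI : NeZero m := ⟨hm.ne'⟩
  -- the selection map
  set sel : (↥(cubesMeeting r E) → Fin d → Fin m) → ↥(cubesMeeting r E) → Fin d → ℤ :=
    fun σ ρ k => (m:ℤ) * (ρ : Fin d → ℤ) k + ((σ ρ k : ℕ) : ℤ) with hseldef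
  have hselbd : ∀ (σ : ↥(cubesMeeting r E) → Fin d → Fin m) (ρ : ↥(cubesMeeting r E)) (k : Fin d), (0:ℤ) ≤ ((σ ρ k : ℕ) : ℤ) ∧ ((σ ρ k : ℕ) : ℤ) < m := by
    intro σ ρ k
    constructor
    · positivity
    · exact_mod_cast (σ ρ k).2
  have hdiv : ∀ σ ρ k, sel σ ρ k / (m:ℤ) = (ρ : Fin d → ℤ) k := by
    intro σ ρ k
    exact div_fact _ _ _ hmZ (hselbd σ ρ k).1 (hselbd σ ρ k).2
  have hsel_inj : ∀ σ, Function.Injective (sel σ) := by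
    intro σ ρ ρ' h
    apply Subtype.ext
    funext k
    rw [← hdiv σ ρ k, ← hdiv σ ρ' k, h]
  have hcube_sel : ∀ σ ρ, dyadicCube s (sel σ ρ) ⊆ dyadicCube r (ρ : Fin d → ℤ) := by
    intro σ ρ
    have h1 := dyadicCube_subset_div hs m hm (sel σ ρ)
    have h2 : (fun k => sel σ ρ k / (m:ℤ)) = (ρ : Fin d → ℤ) := funext (hdiv σ ρ)
    rwa [h2] at h1
  have hcubeR_sub_E : ∀ ρ ∈ cubesMeeting r E, dyadicCube r ρ ⊆ E := by
    intro ρ hρ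
    obtain ⟨S, hS⟩ := hE2
    obtain ⟨x, hx1, hx2⟩ := hρ
    rw [hS] at hx2
    simp only [mem_iUnion] at hx2
    obtain ⟨μ, hμ, hxμ⟩ := hx2
    have hsub : dyadicCube r ρ ⊆ dyadicCube (r * p) μ :=
      dyadicCube_subset_of_meets hr p hp ⟨x, hx1, hxμ⟩
    refine hsub.trans ?_
    rw [hS]
    exact subset_iUnion₂ (s := fun m _ => dyadicCube (r * (p:ℝ)) m) μ hμ
  -- the finite set of cubes of G
  set T : Finset (Fin n × Fin d → ℤ) := hT.toFinset with hTdef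
  set Bad : (↥(cubesMeeting r E) → Fin d → Fin m) → Finset (Fin n × Fin d → ℤ) :=
    fun σ => T.filter (fun M => Function.Injective (cubeRow M) ∧
      ∀ j, cubeRow M j ∈ Set.range (sel σ)) with hBaddef
  -- per-cube fiber bound
  have hfiber : ∀ M : Fin n × Fin d → ℤ,
      (Finset.univ.filter (fun σ => Function.Injective (cubeRow M) ∧
        ∀ j, cubeRow M j ∈ Set.range (sel σ))).card * (m ^ d) ^ n
      ≤ Fintype.card (↥(cubesMeeting r E) → Fin d → Fin m) := by
    intro M
    set fib := Finset.univ.filter (fun σ => Function.Injective (cubeRow M) ∧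
        ∀ j, cubeRow M j ∈ Set.range (sel σ)) with hfibdef
    by_cases hne : fib.Nonempty
    swap
    · rw [Finset.not_nonempty_iff_eq_empty] at hne
      simp [hne]
    obtain ⟨σ₀, hσ₀⟩ := hne
    rw [hfibdef, Finset.mem_filter] at hσ₀
    obtain ⟨-, hInj, hrows⟩ := hσ₀
    choose g hg using hrows
    have hparent : ∀ (σ) (ρ) (j), sel σ ρ = cubeRow M j → ρ = g j := by
      intro σ ρ j h
      apply Subtype.ext
      funext k
      rw [← hdiv σ ρ k, h, ← hg j, hdiv σ₀ (g j) k]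
    set off : Fin n → Fin d → Fin m := fun j => σ₀ (g j) with hoffdef
    have hoffchar : ∀ (σ) (j), cubeRow M j ∈ Set.range (sel σ) ↔ σ (g j) = off j := by
      intro σ j
      constructor
      · rintro ⟨ρ, hρ⟩
        have hρg := hparent σ ρ j hρ
        rw [hρg] at hρ
        have hk : ∀ k, sel σ (g j) k = sel σ₀ (g j) k := fun k => by rw [hρ, ← hg j]
        funext k
        have hk2 := hk k
        simp only [hseldef] at hk2
        have h3 : ((σ (g j) k : ℕ) : ℤ) = ((σ₀ (g j) k : ℕ) : ℤ) := by omega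
        exact Fin.ext (by exact_mod_cast h3)
      · intro h
        refine ⟨g j, ?_⟩
        rw [← hg j]
        funext k
        simp only [hseldef, h, hoffdef]
  -- injectivity of g
    have hg_inj : Function.Injective g := by
      intro j j' h
      apply hInj
      rw [← hg j, ← hg j', h]
    -- injection from fib × tuples into all selections
    set Φ : ↥fib × (Fin n → Fin d → Fin m) → (↥(cubesMeeting r E) → Fin d → Fin m) :=
      fun q x => if h : ∃ j, g j = x then q.2 h.choose else q.1.1 x with hΦdef
    have hrec : ∀ q j, Φ q (g j) = q.2 j := by
      intro q j
      show (if h : ∃ j', g j' = g j then q.2 h.choose else q.1.1 (g j)) = q.2 j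
      rw [dif_pos ⟨j, rfl⟩]
      exact congrArg q.2 (hg_inj (⟨j, rfl⟩ : ∃ j', g j' = g j).choose_spec)
    have hΦinj : Function.Injective Φ := by
      intro q q' h
      have hv : q.2 = q'.2 := funext fun j => by rw [← hrec q j, ← hrec q' j, h]
      have hσ : q.1 = q'.1 := by
        apply Subtype.ext
        funext x
        by_cases hx : ∃ j, g j = x
        · obtain ⟨j, rfl⟩ := hx
          have hq := (Finset.mem_filter.mp q.1.2).2.2 j
          have hq' := (Finset.mem_filter.mp q'.1.2).2.2 j
          rw [hoffchar] at hq hq'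
          rw [hq, hq']
        · have hthis := congrFun h x
          simp only [hΦdef] at hthis
          rwa [dif_neg hx, dif_neg hx] at hthis
      exact Prod.ext hσ hv
    have hcard := Fintype.card_le_of_injective Φ hΦinj
    rw [Fintype.card_prod, Fintype.card_coe, Fintype.card_fun] at hcard
    simpa [Fintype.card_fun, Fintype.card_fin] using hcard
  -- double counting
  have hNT : T.card = cubeCount s G := by
    rw [cubeCount, Set.ncard_eq_toFinset_card _ hT]
  -- double counting
  have hsum : (∑ σ : ↥(cubesMeeting r E) → Fin d → Fin m, (Bad σ).card) * (m ^ d) ^ n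
      ≤ T.card * Fintype.card (↥(cubesMeeting r E) → Fin d → Fin m) := by
    have h1 : (∑ σ : ↥(cubesMeeting r E) → Fin d → Fin m, (Bad σ).card)
        = ∑ M ∈ T, (Finset.univ.filter (fun σ => Function.Injective (cubeRow M) ∧
            ∀ j, cubeRow M j ∈ Set.range (sel σ))).card := by
      simp only [hBaddef, Finset.card_filter]
      rw [Finset.sum_comm]
    rw [h1, Finset.sum_mul]
    calc ∑ M ∈ T, (Finset.univ.filter (fun σ => Function.Injective (cubeRow M) ∧
            ∀ j, cubeRow M j ∈ Set.range (sel σ))).card * (m ^ d) ^ n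
        ≤ ∑ _M ∈ T, Fintype.card (↥(cubesMeeting r E) → Fin d → Fin m) :=
          Finset.sum_le_sum (fun M _ => hfiber M)
      _ = T.card * Fintype.card (↥(cubesMeeting r E) → Fin d → Fin m) := by
          rw [Finset.sum_const, smul_eq_mul]
  -- averaging
  have havg : ∃ σ : ↥(cubesMeeting r E) → Fin d → Fin m, (Bad σ).card * (m ^ d) ^ n ≤ T.card := by
    have hune : (Finset.univ : Finset (↥(cubesMeeting r E) → Fin d → Fin m)).Nonempty :=
      Finset.univ_nonempty
    obtain ⟨σ, -, hσ⟩ := Finset.exists_le_of_sum_le hune (f := fun σ => (Bad σ).card * (m^d)^n)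
      (g := fun _ => T.card) (by
        rw [← Finset.sum_mul]
        calc (∑ σ : ↥(cubesMeeting r E) → Fin d → Fin m, (Bad σ).card) * (m ^ d) ^ n
            ≤ T.card * Fintype.card (↥(cubesMeeting r E) → Fin d → Fin m) := hsum
          _ = ∑ _σ : ↥(cubesMeeting r E) → Fin d → Fin m, T.card := by
              rw [Finset.sum_const, smul_eq_mul, Finset.card_univ, mul_comm])
    exact ⟨σ, hσ⟩
  obtain ⟨σ, hK⟩ := havg
  set K := (Bad σ).card with hKdef
  have h2K : 2 * K ≤ p ^ d := by
    have h1 : (m^d)^n = m^(d*n) := by rw [← pow_mul]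
    have h2 : 2 * (K * m^(d*n)) ≤ 2 * cubeCount s G := by
      apply Nat.mul_le_mul_left
      rw [← h1, ← hNT]; exact hK
    have h3 : 2 * K * m^(d*n) ≤ m^(d*n) * p^d := by
      calc 2 * K * m^(d*n) = 2 * (K * m^(d*n)) := by ring
        _ ≤ 2 * cubeCount s G := h2
        _ ≤ m^(d*n) * p^d := hkey
    have hpow : 0 < m^(d*n) := Nat.pow_pos hm
    calc 2 * K = (2 * K * m^(d*n)) / m^(d*n) := by rw [Nat.mul_div_cancel _ hpow]
      _ ≤ (m^(d*n) * p^d) / m^(d*n) := Nat.div_le_div_right h3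
      _ = p ^ d := by rw [Nat.mul_div_cancel_left _ hpow]
  -- removal
  have hj0 : 0 < n := by omega
  set j0 : Fin n := ⟨0, hj0⟩ with hj0def
  set D : Finset (Fin d → ℤ) := (Bad σ).image (fun M => cubeRow M j0) with hDdef
  have hDcard : D.card ≤ K := Finset.card_image_le
  set SS : Set (Fin d → ℤ) := Set.range (sel σ) \ ↑D with hSSdef
  set F : Set (Fin d → ℝ) := ⋃ i ∈ SS, dyadicCube s i with hFdef
  have hFcm : cubesMeeting s F = SS := cubesMeeting_of_isCubeUnion hs hFdef
  have hFE : F ⊆ E := by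
    rw [hFdef]
    apply iUnion₂_subset
    rintro i ⟨⟨ρ, rfl⟩, -⟩
    exact (hcube_sel σ ρ).trans (hcubeR_sub_E ρ.1 ρ.2)
  have hcond1 : ∀ mf : Fin n → Fin d → ℤ, (∀ j, mf j ∈ cubesMeeting s F) →
      Function.Injective mf → (fun q : Fin n × Fin d => mf q.1 q.2) ∉ cubesMeeting s G := by
    intro mf hmf hinj hMG
    set M : Fin n × Fin d → ℤ := fun q => mf q.1 q.2 with hMdef
    have hrow : cubeRow M = mf := by funext j i; rfl
    have hMBad : M ∈ Bad σ := by
      rw [hBaddef]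
      refine Finset.mem_filter.mpr ⟨hT.mem_toFinset.mpr hMG, ?_, ?_⟩
      · rw [hrow]; exact hinj
      · intro j
        rw [hrow]
        have := hmf j
        rw [hFcm, hSSdef] at this
        exact this.1
    have hin : cubeRow M j0 ∈ D := by
      rw [hDdef]
      exact Finset.mem_image_of_mem _ hMBad
    have hout := hmf j0
    rw [hFcm, hSSdef] at hout
    exact hout.2 (by rw [hrow] at hin; exact hin)
  have hcond2 : ∀ m' ∈ cubesMeeting r E, ∀ m₁ ∈ cubesMeeting s F, ∀ m₂ ∈ cubesMeeting s F,
      dyadicCube s m₁ ⊆ dyadicCube r m' → dyadicCube s m₂ ⊆ dyadicCube r m' → m₁ = m₂ := by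
    intro m' hm' m₁ hm₁ m₂ hm₂ hs1 hs2
    rw [hFcm, hSSdef] at hm₁ hm₂
    obtain ⟨ρ₁, hρ₁⟩ := hm₁.1
    obtain ⟨ρ₂, hρ₂⟩ := hm₂.1
    have hpar : ∀ (ρ : ↥(cubesMeeting r E)) (mm : Fin d → ℤ), sel σ ρ = mm →
        dyadicCube s mm ⊆ dyadicCube r m' → (ρ : Fin d → ℤ) = m' := by
      intro ρ mm hmm hsub
      obtain ⟨x, hx⟩ := dyadicCube_nonempty hs mm
      have hx1 : x ∈ dyadicCube r (ρ : Fin d → ℤ) := by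
        rw [← hmm] at hx
        exact hcube_sel σ ρ hx
      exact dyadicCube_eq_of_mem hr hx1 (hsub hx)
    have h1 := hpar ρ₁ m₁ hρ₁ hs1
    have h2 := hpar ρ₂ m₂ hρ₂ hs2
    have : ρ₁ = ρ₂ := Subtype.ext (h1.trans h2.symm)
    rw [← hρ₁, ← hρ₂, this]
  have hcond3 : ∀ μ ∈ cubesMeeting l E, p ^ d ≤ 2 * cubeCount s (F ∩ dyadicCube l μ) := by
    intro μ hμ
    set Box : Set (Fin d → ℤ) := {u | ∀ k, 0 ≤ u k ∧ u k < (p:ℤ)} with hBoxdef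
    have hcubeμE : dyadicCube l μ ⊆ E := dyadicCube_subset_of_mem_cubesMeeting hl hE2 hμ
    have hρu : ∀ u ∈ Box, dyadicCube r (fun k => (p:ℤ) * μ k + u k) ⊆ dyadicCube l μ := by
      intro u hu
      have h1 := dyadicCube_subset_div hr p hp (fun k => (p:ℤ) * μ k + u k)
      have h2 : (fun k => ((p:ℤ) * μ k + u k) / (p:ℤ)) = μ := by
        funext k; exact div_fact _ _ _ hpZ (hu k).1 (hu k).2
      rw [h2] at h1
      have h3 : r * (p:ℝ) = l := by rw [hrdef, hldef]
      rwa [h3] at h1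
    have hρuR : ∀ u ∈ Box, (fun k => (p:ℤ) * μ k + u k) ∈ cubesMeeting r E := by
      intro u hu
      obtain ⟨x, hx⟩ := dyadicCube_nonempty hr (fun k => (p:ℤ) * μ k + u k)
      exact ⟨x, hx, hcubeμE (hρu u hu hx)⟩
    set ψ : (Fin d → ℤ) → (Fin d → ℤ) := fun u =>
      if h : (fun k => (p:ℤ) * μ k + u k) ∈ cubesMeeting r E then sel σ ⟨_, h⟩ else 0 with hψdef
    have hψu : ∀ u (hu : u ∈ Box), ψ u = sel σ ⟨fun k => (p:ℤ) * μ k + u k, hρuR u hu⟩ := by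
      intro u hu
      rw [hψdef]
      simp only
      rw [dif_pos (hρuR u hu)]
    have hψinj : Set.InjOn ψ Box := by
      intro u hu u' hu' h
      rw [hψu u hu, hψu u' hu'] at h
      have h1 := hsel_inj σ h
      have h2 := congrArg Subtype.val h1
      funext k
      have h3 := congrFun h2 k
      simp only at h3
      omega
    have hAeq : cubesMeeting s (F ∩ dyadicCube l μ)
        = {i | i ∈ SS ∧ dyadicCube s i ⊆ dyadicCube l μ} := by
      ext i
      constructor
      · rintro ⟨x, hx1, hx2, hx3⟩
        have hmp : (0:ℕ) < m * p := Nat.mul_pos hm hp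
        have hcast : s * ((m*p : ℕ):ℝ) = l := by rw [hldef]; push_cast; ring
        constructor
        · rw [hFdef] at hx2
          obtain ⟨i', hi', hxi'⟩ := mem_iUnion₂.mp hx2
          rwa [dyadicCube_eq_of_mem hs hx1 hxi']
        · have h4 := dyadicCube_subset_of_meets hs (m*p) hmp (i := i) (μ := μ)
            (by rw [hcast]; exact ⟨x, hx1, hx3⟩)
          rwa [hcast] at h4
      · rintro ⟨hiSS, hsub⟩
        obtain ⟨x, hx⟩ := dyadicCube_nonempty hs i
        refine ⟨x, hx, ?_, hsub hx⟩
        rw [hFdef]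
        exact mem_iUnion₂.2 ⟨i, hiSS, hx⟩
    have hfinA : {i | i ∈ SS ∧ dyadicCube s i ⊆ dyadicCube l μ}.Finite := by
      apply (Set.finite_range (sel σ)).subset
      rintro i ⟨hi, -⟩
      rw [hSSdef] at hi
      exact hi.1
    have himg : (ψ '' Box) \ ↑D ⊆ {i | i ∈ SS ∧ dyadicCube s i ⊆ dyadicCube l μ} := by
      rintro i ⟨hi1, hiD⟩
      obtain ⟨u, hu, rfl⟩ := hi1
      refine ⟨⟨?_, hiD⟩, ?_⟩
      · rw [hψu u hu]; exact ⟨_, rfl⟩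
      · rw [hψu u hu]
        exact (hcube_sel σ _).trans (hρu u hu)
    have hcount1 : (ψ '' Box).ncard = p ^ d := by
      rw [Set.ncard_image_of_injOn hψinj, hBoxdef]
      exact box_ncard p d
    have hcount2 : (ψ '' Box).ncard ≤ ((ψ '' Box) \ ↑D).ncard + (↑D : Set (Fin d → ℤ)).ncard :=
      Set.ncard_le_ncard_diff_add_ncard _ _ (D.finite_toSet)
    have hcount3 : ((ψ '' Box) \ ↑D).ncard ≤ cubeCount s (F ∩ dyadicCube l μ) := by
      rw [cubeCount, hAeq]
      exact Set.ncard_le_ncard himg hfinA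
    have hDn : (↑D : Set (Fin d → ℤ)).ncard = D.card := Set.ncard_coe_finset D
    have hfin : p ^ d ≤ cubeCount s (F ∩ dyadicCube l μ) + K := by
      calc p^d = (ψ '' Box).ncard := hcount1.symm
        _ ≤ ((ψ '' Box) \ ↑D).ncard + (↑D : Set (Fin d → ℤ)).ncard := hcount2
        _ ≤ cubeCount s (F ∩ dyadicCube l μ) + K := by
            refine add_le_add hcount3 ?_
            rw [hDn]
            exact hDcard.trans (le_refl K)
    omega
  have hFne : F.Nonempty := by
    obtain ⟨x₀, hx₀⟩ := hE0
    set μ₀ : Fin d → ℤ := fun k => ⌊x₀ k / l⌋ with hμ₀def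
    have hμ₀ : μ₀ ∈ cubesMeeting l E :=
      ⟨x₀, (mem_dyadicCube_iff hl _ _).2 (fun k => rfl), hx₀⟩
    have h3 := hcond3 μ₀ hμ₀
    have hpd : 0 < p ^ d := Nat.pow_pos hp
    have : cubeCount s (F ∩ dyadicCube l μ₀) ≠ 0 := by omega
    obtain ⟨i, hi⟩ := Set.nonempty_of_ncard_ne_zero this
    obtain ⟨x, -, hx2, -⟩ := hi
    exact ⟨x, hx2⟩
  exact ⟨F, hFne, hFE, ⟨SS, hFdef⟩, hcond1, hcond2, hcond3⟩
/-- **Lemma 2.1 (single-scale avoidance).** -/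
theorem discrete_avoidance (d n : ℕ) (hd : 1 ≤ d) (hn : 2 ≤ n)
    (l s : ℝ) (hl : IsDyadicLength l) (hs : IsDyadicLength s) (hsl : s < l)
    (E : Set (Fin d → ℝ)) (hE0 : E.Nonempty) (hE1 : E ⊆ unitCube d)
    (hE2 : IsCubeUnion l E)
    (G : Set (Fin n × Fin d → ℝ)) (hG0 : G.Nonempty) (hG1 : IsCubeUnion s G)
    (hGlow : (l / s) ^ d ≤ (cubeCount s G : ℝ))
    (hGhigh : (cubeCount s G : ℝ) ≤ (1 / 2) * (l / s) ^ (d * n)) :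
    ∃ r : ℝ, ∃ F : Set (Fin d → ℝ),
      IsDyadicLength r ∧ s ≤ r ∧ r ≤ l ∧
      (l ^ (-(d : ℝ)) * s ^ ((d : ℝ) * n) * (cubeCount s G : ℝ)) ^
          (1 / ((d : ℝ) * ((n : ℝ) - 1))) ≤ r ∧
      r ≤ 4 * (l ^ (-(d : ℝ)) * s ^ ((d : ℝ) * n) * (cubeCount s G : ℝ)) ^
          (1 / ((d : ℝ) * ((n : ℝ) - 1))) ∧
      F.Nonempty ∧ F ⊆ E ∧ IsCubeUnion s F ∧
      -- (1) Avoidance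
      (∀ m : Fin n → Fin d → ℤ, (∀ j, m j ∈ cubesMeeting s F) → Function.Injective m →
        (fun p : Fin n × Fin d => m p.1 p.2) ∉ cubesMeeting s G) ∧
      -- (2) Non-concentration
      (∀ m' ∈ cubesMeeting r E, ∀ m₁ ∈ cubesMeeting s F, ∀ m₂ ∈ cubesMeeting s F,
        dyadicCube s m₁ ⊆ dyadicCube r m' → dyadicCube s m₂ ⊆ dyadicCube r m' → m₁ = m₂) ∧
      -- (3) Large size
      (∀ m ∈ cubesMeeting l E,
        (1 / 2) * (l / r) ^ d ≤ (cubeCount s (F ∩ dyadicCube l m) : ℝ)) := by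
  classical
  obtain ⟨a, hla⟩ := hl
  obtain ⟨b, hsb⟩ := hs
  have hlpos : 0 < l := by rw [hla]; positivity
  have hspos : 0 < s := by rw [hsb]; positivity
  have h12 : (1:ℝ) < 2 := one_lt_two
  have hab : a < b := by
    have : -(b:ℤ) < -(a:ℤ) := by
      rw [← zpow_lt_zpow_iff_right₀ h12, ← hla, ← hsb]; exact hsl
    omega
  have hn' : 1 ≤ n := by omega
  set N := cubeCount s G with hNdef
  have hls1 : (1:ℝ) < l / s := (one_lt_div hspos).mpr hsl
  have hN1 : (1:ℝ) ≤ (N:ℝ) := le_trans (one_le_pow₀ hls1.le) hGlow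
  have hTfin : (cubesMeeting s G).Finite := by
    by_contra hc
    have : (cubesMeeting s G).ncard = 0 := Set.Infinite.ncard hc
    rw [hNdef, cubeCount] at hN1
    rw [this] at hN1
    norm_num at hN1
  set X := l ^ (-(d : ℝ)) * s ^ ((d : ℝ) * n) * (N : ℝ) with hXdef
  set e := (d : ℝ) * ((n : ℝ) - 1) with hedef
  have hd1 : (1:ℝ) ≤ (d:ℝ) := by exact_mod_cast hd
  have hn2 : (2:ℝ) ≤ (n:ℝ) := by exact_mod_cast hn
  have he1 : 1 ≤ e := by nlinarith
  have hepos : 0 < e := lt_of_lt_of_le one_pos he1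
  have hXpos : 0 < X := by
    have h1 : (0:ℝ) < l ^ (-(d : ℝ)) := Real.rpow_pos_of_pos hlpos _
    have h2 : (0:ℝ) < s ^ ((d : ℝ) * n) := Real.rpow_pos_of_pos hspos _
    have h3 : (0:ℝ) < (N:ℝ) := by linarith
    exact mul_pos (mul_pos h1 h2) h3
  set Q := X ^ (1 / e) with hQdef
  have hQpos : 0 < Q := Real.rpow_pos_of_pos hXpos _
  -- rpow-pow conversions
  have hcast_e : ((d * (n - 1) : ℕ) : ℝ) = e := by
    rw [hedef]; push_cast [Nat.cast_sub hn']; ring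
  have hpow_e : ∀ x : ℝ, x ^ (d * (n - 1)) = x ^ e := fun x => by
    rw [← hcast_e, Real.rpow_natCast]
  have hcast_dn : s ^ ((d : ℝ) * n) = s ^ ((d * n : ℕ)) := by
    rw [← Real.rpow_natCast s (d * n)]
    congr 1
    push_cast
    ring
  have hld : l ^ (-(d:ℝ)) = (l ^ (d:ℕ))⁻¹ := by
    rw [Real.rpow_neg hlpos.le, ← Real.rpow_natCast l d]
  have hQe : Q ^ e = X := by
    rw [hQdef, ← Real.rpow_mul hXpos.le, one_div_mul_cancel hepos.ne', Real.rpow_one]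
  have hmono : ∀ A B : ℝ, 0 < A → 0 < B → A ^ e ≤ B ^ e → A ≤ B := by
    intro A B hA hB h
    have h1 := Real.rpow_le_rpow (Real.rpow_pos_of_pos hA e).le h (by positivity : (0:ℝ) ≤ 1/e)
    rwa [← Real.rpow_mul hA.le, ← Real.rpow_mul hB.le, mul_one_div_cancel hepos.ne',
      Real.rpow_one, Real.rpow_one] at h1
  have hddn : d + d * (n - 1) = d * n := by
    have h1 : d * (n-1) = d*n - d*1 := by rw [Nat.mul_sub]
    have h2 : d*1 ≤ d*n := Nat.mul_le_mul_left d hn'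
    omega
  have hXge : s ^ e ≤ X := by
    have h1 : l ^ (-(d:ℝ)) * s ^ ((d:ℝ) * n) * ((l/s)^d) ≤ X := by
      rw [hXdef]
      have hpos : (0:ℝ) < l ^ (-(d:ℝ)) * s ^ ((d:ℝ) * n) :=
        mul_pos (Real.rpow_pos_of_pos hlpos _) (Real.rpow_pos_of_pos hspos _)
      calc l ^ (-(d:ℝ)) * s ^ ((d:ℝ) * n) * ((l/s)^d)
          = (l ^ (-(d:ℝ)) * s ^ ((d:ℝ) * n)) * ((l/s)^d) := by ring
        _ ≤ (l ^ (-(d:ℝ)) * s ^ ((d:ℝ) * n)) * (N:ℝ) := by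
            exact mul_le_mul_of_nonneg_left hGlow hpos.le
        _ = l ^ (-(d:ℝ)) * s ^ ((d:ℝ) * n) * (N:ℝ) := by ring
    refine le_trans (le_of_eq ?_) h1
    rw [← hpow_e, hcast_dn, hld, div_pow]
    have hsd : (s:ℝ) ^ (d:ℕ) ≠ 0 := by positivity
    have hldne : (l:ℝ) ^ (d:ℕ) ≠ 0 := by positivity
    have h2 : s ^ ((d * n : ℕ)) = s ^ (d * (n-1)) * s ^ (d:ℕ) := by
      rw [← pow_add]
      congr 1
      omega
    rw [h2]
    field_simp
  have hQs : s ≤ Q := hmono s Q hspos hQpos (by rw [hQe]; exact hXge)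
  have hXle : X ≤ l ^ e := by
    have hpos : (0:ℝ) < l ^ (-(d:ℝ)) * s ^ ((d:ℝ) * n) :=
      mul_pos (Real.rpow_pos_of_pos hlpos _) (Real.rpow_pos_of_pos hspos _)
    have h1 : X ≤ l ^ (-(d:ℝ)) * s ^ ((d:ℝ) * n) * ((1/2) * (l/s)^(d*n)) := by
      rw [hXdef]
      exact mul_le_mul_of_nonneg_left hGhigh hpos.le
    refine le_trans h1 ?_
    rw [← hpow_e]
    have hsd : (s:ℝ) ^ ((d*n : ℕ)) ≠ 0 := by positivity
    have hldne : (l:ℝ) ^ (d:ℕ) ≠ 0 := by positivity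
    have h2 : l ^ ((d * n : ℕ)) = l ^ (d * (n-1)) * l ^ (d:ℕ) := by
      rw [← pow_add]
      congr 1
      omega
    have h3 : (0:ℝ) < l ^ (d * (n-1)) := by positivity
    have h4 : l ^ (-(d:ℝ)) * s ^ ((d:ℝ)*n) * ((1/2) * (l/s)^(d*n)) = (1/2) * l ^ (d*(n-1)) := by
      rw [hcast_dn, hld, div_pow, h2]
      field_simp
    rw [h4]
    linarith
  have hQl : Q ≤ l := hmono Q l hQpos hlpos (by rw [hQe]; exact hXle)
  -- choose the dyadic scale r
  have hminpos : 0 < min l (4*Q) := lt_min hlpos (by positivity)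
  have hex : ∃ c : ℕ, (2:ℝ)^(-(c:ℤ)) ≤ min l (4*Q) := by
    obtain ⟨c, hc⟩ := exists_pow_lt_of_lt_one hminpos (by norm_num : (1/2:ℝ) < 1)
    refine ⟨c, le_of_lt ?_⟩
    have hh : (2:ℝ)^(-(c:ℤ)) = ((1/2:ℝ))^c := by
      rw [one_div, inv_pow, ← zpow_natCast, ← zpow_neg]
    rwa [hh]
  set c := Nat.find hex with hcdef
  set r := (2:ℝ)^(-(c:ℤ)) with hrdef
  have hrspec : r ≤ min l (4*Q) := Nat.find_spec hex
  have hrl : r ≤ l := hrspec.trans (min_le_left _ _)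
  have hr4Q : r ≤ 4*Q := hrspec.trans (min_le_right _ _)
  have hrpos : 0 < r := by rw [hrdef]; positivity
  have hac : a ≤ c := by
    have h1 : (2:ℝ)^(-(c:ℤ)) ≤ (2:ℝ)^(-(a:ℤ)) := by rw [← hla]; exact hrl
    have h2 : -(c:ℤ) ≤ -(a:ℤ) := (zpow_le_zpow_iff_right₀ h12).mp h1
    omega
  have hdicho : (r = l ∧ l ≤ 4*Q) ∨ 2*Q < r := by
    rcases le_or_gt l (4*Q) with hcase | hcase
    · left
      have hca : c ≤ a := by
        apply Nat.find_le
        rw [← hla]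
        exact le_min (le_refl l) hcase
      have hceq : c = a := le_antisymm hca hac
      exact ⟨by rw [hrdef, hceq, hla], hcase⟩
    · right
      have hc0 : ¬ ((2:ℝ)^(-((0:ℕ):ℤ)) ≤ min l (4*Q)) := by
        simp only [Nat.cast_zero, neg_zero, zpow_zero]
        have hl1 : l ≤ 1 := by
          rw [hla]
          have h0 : -(a:ℤ) ≤ 0 := by omega
          calc (2:ℝ)^(-(a:ℤ)) ≤ (2:ℝ)^(0:ℤ) := (zpow_le_zpow_iff_right₀ h12).mpr h0
            _ = 1 := zpow_zero 2
        intro hcon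
        have hmr := min_le_right l (4*Q)
        have hml := min_le_left l (4*Q)
        linarith
      have hc1 : 1 ≤ c := by
        rcases Nat.eq_zero_or_pos c with h0 | h1
        · exfalso
          apply hc0
          have hsp := hrspec
          rw [hrdef, h0] at hsp
          exact_mod_cast hsp
        · exact h1
      have hnotmin : ¬ ((2:ℝ)^(-((c-1:ℕ):ℤ)) ≤ min l (4*Q)) := Nat.find_min hex (by omega)
      push_neg at hnotmin
      have hmineq : min l (4*Q) = 4*Q := min_eq_right hcase.le
      have h2r : 4*Q < 2 * r := by
        have hcc : (((c-1:ℕ)):ℤ) = (c:ℤ) - 1 := by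
          push_cast [Nat.cast_sub hc1]
          ring
        have heq2 : (2:ℝ)^(-((c-1:ℕ):ℤ)) = 2 * r := by
          rw [hcc, hrdef, show -((c:ℤ)-1) = 1 + -(c:ℤ) by ring,
            zpow_add₀ (by norm_num : (2:ℝ) ≠ 0)]
          norm_num
        rw [heq2, hmineq] at hnotmin
        exact hnotmin
      linarith
  have hQr : Q ≤ r := by
    rcases hdicho with ⟨hrl2, -⟩ | h2Q
    · rw [hrl2]; exact hQl
    · linarith
  have hsr : s ≤ r := hQs.trans hQr
  have hcb : c ≤ b := by
    have h1 : (2:ℝ)^(-(b:ℤ)) ≤ (2:ℝ)^(-(c:ℤ)) := by rw [← hsb, ← hrdef]; exact hsr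
    have h2 : -(b:ℤ) ≤ -(c:ℤ) := (zpow_le_zpow_iff_right₀ h12).mp h1
    omega
  -- the key real inequality
  have hkeyR : 2 * (N:ℝ) * s^((d*n : ℕ)) ≤ l^(d:ℕ) * r^(d*(n-1)) := by
    rcases hdicho with ⟨hrl2, -⟩ | h2Q
    · rw [hrl2, ← pow_add, hddn]
      have hsd : (0:ℝ) < s ^ ((d*n : ℕ)) := by positivity
      have h1 : 2 * (N:ℝ) ≤ (l/s)^(d*n) := by linarith
      calc 2 * (N:ℝ) * s^((d*n:ℕ)) ≤ (l/s)^(d*n) * s^((d*n:ℕ)) :=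
            mul_le_mul_of_nonneg_right h1 hsd.le
        _ = l ^ (d*n) := by
            rw [div_pow]
            exact div_mul_cancel₀ _ (by positivity : (s:ℝ)^(d*n) ≠ 0)
    · have hre : 2 * X ≤ r ^ (d*(n-1)) := by
        rw [hpow_e]
        have h1 : (2*Q)^e ≤ r^e :=
          Real.rpow_le_rpow (by positivity) h2Q.le hepos.le
        have h2 : (2*Q)^e = 2^e * Q^e := Real.mul_rpow (by norm_num) hQpos.le
        have h3 : (2:ℝ) ≤ 2^e := by
          calc (2:ℝ) = 2^(1:ℝ) := (Real.rpow_one 2).symm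
            _ ≤ 2^e := Real.rpow_le_rpow_of_exponent_le one_le_two he1
        have h4 : 0 < Q ^ e := Real.rpow_pos_of_pos hQpos e
        have h5 : 2 * Q^e ≤ 2^e * Q^e := mul_le_mul_of_nonneg_right h3 h4.le
        calc 2 * X = 2 * Q^e := by rw [hQe]
          _ ≤ 2^e * Q^e := h5
          _ = (2*Q)^e := h2.symm
          _ ≤ r^e := h1
      have hlX : l^(d:ℕ) * X = s^((d*n:ℕ)) * N := by
        rw [hXdef, hcast_dn, hld]
        have hlne : (l:ℝ)^(d:ℕ) ≠ 0 := by positivity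
        field_simp
      have hlpow : (0:ℝ) < l^(d:ℕ) := by positivity
      calc 2 * (N:ℝ) * s^((d*n:ℕ)) = 2 * (s^((d*n:ℕ)) * N) := by ring
        _ = 2 * (l^(d:ℕ) * X) := by rw [← hlX]
        _ = l^(d:ℕ) * (2 * X) := by ring
        _ ≤ l^(d:ℕ) * r^(d*(n-1)) := mul_le_mul_of_nonneg_left hre hlpow.le
  -- natural number scale ratios
  set em : ℕ := 2^(b-c) with hemdef
  set ep : ℕ := 2^(c-a) with hepdef
  have hm : 0 < em := Nat.pow_pos (by norm_num)
  have hp : 0 < ep := Nat.pow_pos (by norm_num)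
  have hemr : (em:ℝ) = (2:ℝ)^(((b-c:ℕ)):ℤ) := by
    rw [hemdef, zpow_natCast]
    push_cast
    ring
  have hepr : (ep:ℝ) = (2:ℝ)^(((c-a:ℕ)):ℤ) := by
    rw [hepdef, zpow_natCast]
    push_cast
    ring
  have h2ne : (2:ℝ) ≠ 0 := by norm_num
  have hrsm : r = s * em := by
    rw [hsb, hemr, hrdef, ← zpow_add₀ h2ne]
    congr 1
    omega
  have hlrp : l = s * em * ep := by
    rw [hsb, hemr, hepr, hla, ← zpow_add₀ h2ne, ← zpow_add₀ h2ne]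
    congr 1
    omega
  have hlrp2 : l = r * ep := by
    rw [hlrp, hrsm]
  -- the key inequality in ℕ
  have hsd : (0:ℝ) < s ^ ((d*n : ℕ)) := by positivity
  have hprod : l^(d:ℕ) * r^(d*(n-1)) = s^((d*n:ℕ)) * ((em:ℝ)^(d*n) * (ep:ℝ)^d) := by
    rw [hlrp, hrsm]
    calc ((s*(em:ℝ))*(ep:ℝ))^d * (s*(em:ℝ))^(d*(n-1))
        = (s*(em:ℝ))^(d + d*(n-1)) * (ep:ℝ)^d := by rw [mul_pow, pow_add]; ring
      _ = (s*(em:ℝ))^(d*n) * (ep:ℝ)^d := by rw [hddn]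
      _ = s^(d*n) * ((em:ℝ)^(d*n) * (ep:ℝ)^d) := by rw [mul_pow]; ring
  have hkeyN : 2 * N ≤ em ^ (d * n) * ep ^ d := by
    have h2 : s^((d*n:ℕ)) * (2*(N:ℝ)) ≤ s^((d*n:ℕ)) * ((em:ℝ)^(d*n) * (ep:ℝ)^d) := by
      calc s^((d*n:ℕ)) * (2*(N:ℝ)) = 2 * (N:ℝ) * s^((d*n:ℕ)) := by ring
        _ ≤ l^(d:ℕ) * r^(d*(n-1)) := hkeyR
        _ = s^((d*n:ℕ)) * ((em:ℝ)^(d*n) * (ep:ℝ)^d) := hprod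
    have h3 : 2*(N:ℝ) ≤ (em:ℝ)^(d*n) * (ep:ℝ)^d := (mul_le_mul_iff_right₀ hsd).mp h2
    exact_mod_cast h3
  -- apply the selection lemma
  have hE2' : IsCubeUnion (s * em * ep) E := by rw [← hlrp]; exact hE2
  obtain ⟨F, hFne, hFE, hFcu, hc1, hc2, hc3⟩ :=
    selection_lemma d n hd hn s hspos em ep hm hp E hE0 hE1 hE2' G hTfin hkeyN
  rw [← hlrp] at hc3
  rw [← hrsm] at hc2
  refine ⟨r, F, ⟨c, hrdef⟩, hsr, hrl, hQr, hr4Q, hFne, hFE, hFcu, hc1, hc2, ?_⟩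
  intro μ hμ
  have h1 := hc3 μ hμ
  have hlr : l / r = (ep:ℝ) := by
    rw [hlrp2, mul_comm, mul_div_assoc, div_self hrpos.ne', mul_one]
  rw [hlr]
  have h2 : ((ep^d : ℕ):ℝ) ≤ ((2 * cubeCount s (F ∩ dyadicCube l μ) : ℕ):ℝ) := by
    exact_mod_cast h1
  push_cast at h2
  linarith

end
end

section
/- Let d ≥ 1, n ≥ 2 be integers, let Z ⊆ ℝ^{dn}, let {Z_k}_{k≥1} be a sequence of subsets of ℝ^{dn} that strongly covers Z, and let {l_k} be a sequence of dyadic lengths converging to zero. For each k, let X_k ⊆ ℝ^d be a union of cubes of B_{l_k}^d, and assume that for every strongly non-diagonal cube I ∈ B_{l_k}^{dn}(Z_k), I is not contained in X_k^n. Then for any pairwise distinct points x_1, …, x_n ∈ ⋂_{k≥1} X_k, one has (x_1, …, x_n) ∉ Z. -/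
open Filter Set

noncomputable section

lemma mem_own_dyadicCube {ι : Type*} {l : ℝ} (hl : 0 < l) (x : ι → ℝ) :
    x ∈ dyadicCube l (fun i => ⌊x i / l⌋) := by
  intro i
  constructor
  · have h := Int.floor_le (x i / l)
    have := mul_le_mul_of_nonneg_right h hl.le
    rwa [div_mul_cancel₀ _ hl.ne', mul_comm] at this
  · have h := Int.lt_floor_add_one (x i / l)
    have := mul_lt_mul_of_pos_right h hl
    rwa [div_mul_cancel₀ _ hl.ne', mul_comm] at this

lemma dyadicCube_unique {ι : Type*} {l : ℝ} (hl : 0 < l) {x : ι → ℝ} {m m' : ι → ℤ}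
    (h : x ∈ dyadicCube l m) (h' : x ∈ dyadicCube l m') : m = m' := by
  funext i
  obtain ⟨h1, h2⟩ := h i
  obtain ⟨h1', h2'⟩ := h' i
  have hle : (m i : ℝ) < (m' i : ℝ) + 1 := lt_of_mul_lt_mul_left (h1.trans_lt h2') hl.le
  have hle' : (m' i : ℝ) < (m i : ℝ) + 1 := lt_of_mul_lt_mul_left (h1'.trans_lt h2) hl.le
  have : (m i : ℤ) < m' i + 1 := by exact_mod_cast hle
  have : (m' i : ℤ) < m i + 1 := by exact_mod_cast hle'
  omega

/-- **Lemma 3.1.** If `{Z_k}` strongly covers `Z`, `l_k → 0`, each `X_k` is a union of cubes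
of `B_{l_k}^d` whose `n`-fold power avoids the strongly non-diagonal cubes of
`B_{l_k}^{dn}(Z_k)`, then `⋂ X_k` contains no `n`-tuple of distinct points lying in `Z`. -/
theorem strong_cover_avoidance (d n : ℕ) (hd : 1 ≤ d) (hn : 2 ≤ n)
    (Z : Set (Fin n × Fin d → ℝ)) (Zk : ℕ → Set (Fin n × Fin d → ℝ))
    (hcover : ∀ z ∈ Z, {k | z ∈ Zk k}.Infinite)
    (l : ℕ → ℝ) (hldyadic : ∀ k, IsDyadicLength (l k))
    (hllim : Filter.Tendsto l Filter.atTop (nhds 0))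
    (X : ℕ → Set (Fin d → ℝ)) (hXcube : ∀ k, IsCubeUnion (l k) (X k))
    (havoid : ∀ k, ∀ M : Fin n × Fin d → ℤ, StronglyNonDiagonal M →
      M ∈ cubesMeeting (l k) (Zk k) → ¬ dyadicCube (l k) M ⊆ nthPower (X k)) :
    ∀ x : Fin n → Fin d → ℝ, (∀ j, x j ∈ ⋂ k, X k) → Function.Injective x →
      tuple x ∉ Z := by
  intro x hx hinj htZ
  have hlpos : ∀ k, 0 < l k := by
    intro k
    obtain ⟨j, hj⟩ := hldyadic k
    rw [hj]; positivity
  -- minimal pairwise distance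
  have hsne : (Finset.univ.offDiag : Finset (Fin n × Fin n)).Nonempty := by
    refine ⟨(⟨0, by omega⟩, ⟨1, by omega⟩), ?_⟩
    rw [Finset.mem_offDiag]
    exact ⟨Finset.mem_univ _, Finset.mem_univ _, Fin.ne_of_val_ne (by norm_num)⟩
  set ε : ℝ := (Finset.univ.offDiag : Finset (Fin n × Fin n)).inf' hsne
    (fun p => dist (x p.1) (x p.2)) with hεdef
  have hε : 0 < ε := by
    rw [hεdef, Finset.lt_inf'_iff]
    rintro ⟨j, j'⟩ hp
    rw [Finset.mem_offDiag] at hp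
    exact dist_pos.mpr fun h => hp.2.2 (hinj h)
  have hεle : ∀ j j' : Fin n, j ≠ j' → ε ≤ dist (x j) (x j') := by
    intro j j' hne
    rw [hεdef]
    exact Finset.inf'_le (fun p : Fin n × Fin n => dist (x p.1) (x p.2)) (show (j, j') ∈ Finset.univ.offDiag from Finset.mem_offDiag.mpr ⟨Finset.mem_univ _, Finset.mem_univ _, hne⟩)
  -- choose k
  have hev : ∀ᶠ k in atTop, l k < ε := hllim.eventually_lt_const hε
  obtain ⟨N, hN⟩ := eventually_atTop.mp hev
  obtain ⟨k, hkZ, hkN⟩ := ((hcover (tuple x) htZ).exists_gt N)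
  have hlk : 0 < l k := hlpos k
  have hlkε : l k < ε := hN k hkN.le
  -- the cube containing tuple x
  set M : Fin n × Fin d → ℤ := fun p => ⌊tuple x p / l k⌋ with hMdef
  have hmem : tuple x ∈ dyadicCube (l k) M := mem_own_dyadicCube hlk _
  have hrow : ∀ j, cubeRow M j = fun i => ⌊x j i / l k⌋ := fun j => rfl
  have hxrow : ∀ j, x j ∈ dyadicCube (l k) (cubeRow M j) := by
    intro j; rw [hrow]; exact mem_own_dyadicCube hlk _
  have hsnd : StronglyNonDiagonal M := by
    intro j j' heq
    by_contra hne
    have hdist : dist (x j) (x j') < l k := by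
      rw [dist_pi_lt_iff hlk]
      intro i
      have h1 := (hxrow j) i
      have h2 := (hxrow j') i
      rw [heq] at h1
      rw [Real.dist_eq, abs_sub_lt_iff]
      constructor <;> nlinarith [h1.1, h1.2, h2.1, h2.2]
    exact absurd (hεle j j' hne) (not_le.mpr (hdist.trans hlkε))
  have hmeet : M ∈ cubesMeeting (l k) (Zk k) := ⟨tuple x, hmem, hkZ⟩
  refine havoid k M hsnd hmeet ?_
  -- the cube is contained in (X k)^n
  obtain ⟨S, hS⟩ := hXcube k
  have hrowsub : ∀ j, dyadicCube (l k) (cubeRow M j) ⊆ X k := by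
    intro j
    have hxXk : x j ∈ X k := by
      have := hx j; rw [Set.mem_iInter] at this; exact this k
    rw [hS] at hxXk
    simp only [Set.mem_iUnion] at hxXk
    obtain ⟨m, hm, hxm⟩ := hxXk
    have : m = cubeRow M j := dyadicCube_unique hlk hxm (hxrow j)
    rw [hS]
    exact Set.subset_iUnion₂_of_subset m hm (by rw [this])
  intro y hy j
  exact hrowsub j fun i => hy (j, i)

end
end

section
/- Fix integers d ≥ 1, n ≥ 2, a real α with d ≤ α < dn, and a sequence ε_k > 0 with dn − α − 2ε_k > 0 for all k. Let {Z_k}_{k≥1} be subsets of ℝ^{dn} such that #B_l^{dn}(Z_k) ≥ l^{−d} for every dyadic length l ∈ (0,1] and every k. Let {l_k}_{k≥0} be dyadic lengths with l_0 = 1 satisfying, for each k ≥ 1: #B_{l_k}^{dn}(Z_k) ≤ l_k^{−α−ε_k/2}, l_k^{dn−α−ε_k} ≤ (1/2)·l_{k−1}^{dn}, and l_k^{ε_k} ≤ l_{k−1}^{2d}. Then there exist a constant C > 0 depending only on d and n, sets {X_k}_{k≥0}, and dyadic lengths {r_k}_{k≥1} such that: X_0 = [0,1)^d; each X_k (k ≥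 1) is a nonempty union of cubes of B_{l_k}^d contained in X_{k−1}; no strongly non-diagonal cube of B_{l_k}^{dn}(Z_k) is contained in X_k^n; l_k ≤ r_k ≤ l_{k−1}; r_k ≤ C·l_k^{(dn−α−ε_k)/(d(n−1))}; #B_{l_k}^d(X_k ∩ I) ≥ (1/2)(l_{k−1}/r_k)^d for every I ∈ B_{l_{k−1}}^d(X_{k−1}); and #B_{l_k}^d(X_k ∩ I') ≤ 1 for every I' ∈ B_{r_k}^d(X_{k−1}). -/
open Filter Set

noncomputable section

namespace NestedAux

variable {ι : Type*}

/-- index of the dyadic cube at scale `2^{-a}` containing `x`. -/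
def idx (a : ℕ) (x : ι → ℝ) : ι → ℤ := fun i => ⌊x i * 2 ^ a⌋

lemma two_zpow_pos (a : ℕ) : (0:ℝ) < (2:ℝ) ^ (-(a:ℤ)) := zpow_pos two_pos _

lemma two_zpow_mul (a : ℕ) : (2:ℝ) ^ (-(a:ℤ)) * 2 ^ a = 1 := by
  rw [zpow_neg, zpow_natCast]
  exact inv_mul_cancel₀ (by positivity)

lemma mem_cube_iff {a : ℕ} {m : ι → ℤ} {x : ι → ℝ} :
    x ∈ dyadicCube ((2:ℝ) ^ (-(a:ℤ))) m ↔ idx a x = m := by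
  have h2 : (0:ℝ) < (2:ℝ) ^ a := by positivity
  constructor
  · intro hx
    funext i
    obtain ⟨h1, h2'⟩ := hx i
    have e1 : (m i : ℝ) ≤ x i * 2 ^ a := by
      have := mul_le_mul_of_nonneg_right h1 (le_of_lt h2)
      calc (m i : ℝ) = (2:ℝ) ^ (-(a:ℤ)) * m i * 2 ^ a := by
            rw [mul_comm ((2:ℝ) ^ (-(a:ℤ))) _, mul_assoc, two_zpow_mul, mul_one]
        _ ≤ x i * 2 ^ a := this
    have e2 : x i * 2 ^ a < (m i : ℝ) + 1 := by
      have := mul_lt_mul_of_pos_right h2' h2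
      calc x i * 2 ^ a < (2:ℝ) ^ (-(a:ℤ)) * ((m i : ℝ) + 1) * 2 ^ a := this
        _ = (m i : ℝ) + 1 := by
            rw [mul_comm ((2:ℝ) ^ (-(a:ℤ))) _, mul_assoc, two_zpow_mul, mul_one]
    exact Int.floor_eq_iff.2 ⟨e1, e2⟩
  · intro hx i
    have := Int.floor_eq_iff.1 (congrFun hx i)
    obtain ⟨e1, e2⟩ := this
    constructor
    · have := mul_le_mul_of_nonneg_right e1 (le_of_lt (two_zpow_pos a))
      calc (2:ℝ) ^ (-(a:ℤ)) * m i = (m i : ℝ) * (2:ℝ) ^ (-(a:ℤ)) := mul_comm _ _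
        _ ≤ x i * 2 ^ a * (2:ℝ) ^ (-(a:ℤ)) := this
        _ = x i := by rw [mul_assoc, mul_comm ((2:ℝ)^a) _, two_zpow_mul, mul_one]
    · have := mul_lt_mul_of_pos_right e2 (two_zpow_pos a)
      calc x i = x i * 2 ^ a * (2:ℝ) ^ (-(a:ℤ)) := by
            rw [mul_assoc, mul_comm ((2:ℝ)^a) _, two_zpow_mul, mul_one]
        _ < ((m i : ℝ) + 1) * (2:ℝ) ^ (-(a:ℤ)) := this
        _ = (2:ℝ) ^ (-(a:ℤ)) * ((m i : ℝ) + 1) := mul_comm _ _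

/-- the corner point of a dyadic cube. -/
def corner (a : ℕ) (m : ι → ℤ) : ι → ℝ := fun i => (2:ℝ) ^ (-(a:ℤ)) * m i

lemma idx_corner (a : ℕ) (m : ι → ℤ) : idx a (corner a m) = m := by
  funext i
  have : corner a m i * 2 ^ a = (m i : ℝ) := by
    simp only [corner]
    rw [mul_comm ((2:ℝ) ^ (-(a:ℤ))) _, mul_assoc, two_zpow_mul, mul_one]
  simp [idx, this]

lemma corner_mem (a : ℕ) (m : ι → ℤ) :
    corner a m ∈ dyadicCube ((2:ℝ) ^ (-(a:ℤ))) m :=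
  mem_cube_iff.2 (idx_corner a m)

lemma cubesMeeting_eq (a : ℕ) (E : Set (ι → ℝ)) :
    cubesMeeting ((2:ℝ) ^ (-(a:ℤ))) E = idx a '' E := by
  ext m
  constructor
  · rintro ⟨x, hx1, hx2⟩
    exact ⟨x, hx2, mem_cube_iff.1 hx1⟩
  · rintro ⟨x, hx, rfl⟩
    exact ⟨x, mem_cube_iff.2 rfl, hx⟩

/-- `M` is a subindex of `m` with ratio `c`. -/
def Rel (c : ℤ) (m M : ι → ℤ) : Prop := ∀ i, c * m i ≤ M i ∧ M i < c * (m i + 1)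

lemma Rel.unique {c : ℤ} (hc : 0 < c) {m m' M : ι → ℤ} (h : Rel c m M) (h' : Rel c m' M) :
    m = m' := by
  funext i
  obtain ⟨h1, h2⟩ := h i
  obtain ⟨h1', h2'⟩ := h' i
  by_contra hne
  rcases lt_or_gt_of_ne hne with hlt | hlt
  · have : m i + 1 ≤ m' i := hlt
    have : c * (m i + 1) ≤ c * m' i := by
      exact mul_le_mul_of_nonneg_left this (le_of_lt hc)
    omega
  · have : m' i + 1 ≤ m i := hlt
    have : c * (m' i + 1) ≤ c * m i := mul_le_mul_of_nonneg_left this (le_of_lt hc)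
    omega

lemma rel_idx {b a : ℕ} (h : b ≤ a) (x : ι → ℝ) :
    Rel (2 ^ (a - b)) (idx b x) (idx a x) := by
  intro i
  have hc : ((2:ℤ) ^ (a - b) : ℝ) * (2:ℝ) ^ b = (2:ℝ) ^ a := by
    push_cast
    rw [← pow_add]
    congr 1
    omega
  have hb : (0:ℝ) < (2:ℝ) ^ b := by positivity
  have key1 : ((2:ℤ) ^ (a-b) : ℝ) * (idx b x i : ℝ) ≤ x i * 2 ^ a := by
    have h1 : (idx b x i : ℝ) ≤ x i * 2 ^ b := Int.floor_le _
    calc ((2:ℤ) ^ (a-b) : ℝ) * (idx b x i : ℝ)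
        ≤ ((2:ℤ) ^ (a-b) : ℝ) * (x i * 2 ^ b) := by
          apply mul_le_mul_of_nonneg_left h1; positivity
      _ = x i * 2 ^ a := by rw [mul_comm, mul_assoc, mul_comm ((2:ℝ)^b) _, hc]
  have key2 : x i * 2 ^ a < ((2:ℤ) ^ (a-b) : ℝ) * ((idx b x i : ℝ) + 1) := by
    have h1 : x i * 2 ^ b < (idx b x i : ℝ) + 1 := Int.lt_floor_add_one _
    calc x i * 2 ^ a = ((2:ℤ) ^ (a-b) : ℝ) * (x i * 2 ^ b) := by
          rw [← hc]; ring
      _ < ((2:ℤ) ^ (a-b) : ℝ) * ((idx b x i : ℝ) + 1) := by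
          apply mul_lt_mul_of_pos_left h1; positivity
  constructor
  · exact Int.le_floor.2 (by push_cast; exact key1)
  · exact Int.floor_lt.2 (by push_cast; push_cast at key2; exact key2)

lemma Rel.comp {c₁ c₂ : ℤ} (hc₁ : 0 < c₁) {p m M : ι → ℤ}
    (h₂ : Rel c₂ p m) (h₁ : Rel c₁ m M) : Rel (c₁ * c₂) p M := by
  intro i
  obtain ⟨a1, a2⟩ := h₂ i
  obtain ⟨b1, b2⟩ := h₁ i
  constructor
  · calc c₁ * c₂ * p i = c₁ * (c₂ * p i) := by ring
      _ ≤ c₁ * m i := by exact mul_le_mul_of_nonneg_left a1 (le_of_lt hc₁)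
      _ ≤ M i := b1
  · have : m i + 1 ≤ c₂ * (p i + 1) := a2
    calc M i < c₁ * (m i + 1) := b2
      _ ≤ c₁ * (c₂ * (p i + 1)) := mul_le_mul_of_nonneg_left this (le_of_lt hc₁)
      _ = c₁ * c₂ * (p i + 1) := by ring

/-- from `Rel T q M` and `Rel (T*u) m M`, deduce `Rel u m q`. -/
lemma Rel.factor {T u : ℤ} (hT : 0 < T) {m q M : ι → ℤ}
    (hq : Rel T q M) (hm : Rel (T * u) m M) : Rel u m q := by
  intro i
  obtain ⟨a1, a2⟩ := hq i
  obtain ⟨b1, b2⟩ := hm i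
  constructor
  · have h1 : T * (u * m i) < T * (q i + 1) := by
      calc T * (u * m i) = T * u * m i := by ring
        _ ≤ M i := b1
        _ < T * (q i + 1) := a2
    have := lt_of_mul_lt_mul_left h1 (le_of_lt hT)
    omega
  · have h1 : T * q i < T * (u * (m i + 1)) := by
      calc T * q i ≤ M i := a1
        _ < T * u * (m i + 1) := b2
        _ = T * (u * (m i + 1)) := by ring
    have := lt_of_mul_lt_mul_left h1 (le_of_lt hT)
    omega

section Counting

variable [Fintype ι] [DecidableEq ι]

def boxFinset (c : ℤ) (m : ι → ℤ) : Finset (ι → ℤ) :=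
  Fintype.piFinset fun i => Finset.Ico (c * m i) (c * (m i + 1))

lemma mem_boxFinset {c : ℤ} {m M : ι → ℤ} : M ∈ boxFinset c m ↔ Rel c m M := by
  simp [boxFinset, Fintype.mem_piFinset, Finset.mem_Ico, Rel]

lemma setOf_rel_eq (c : ℤ) (m : ι → ℤ) :
    {M : ι → ℤ | Rel c m M} = ↑(boxFinset c m) := by
  ext M; simp [mem_boxFinset]

lemma rel_finite (c : ℤ) (m : ι → ℤ) : {M : ι → ℤ | Rel c m M}.Finite := by
  rw [setOf_rel_eq]; exact (boxFinset c m).finite_toSet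

lemma ncard_rel (c : ℤ) (hc : 0 ≤ c) (m : ι → ℤ) :
    {M : ι → ℤ | Rel c m M}.ncard = c.toNat ^ (Fintype.card ι) := by
  rw [setOf_rel_eq, Set.ncard_coe_finset, boxFinset, Fintype.card_piFinset]
  have : ∀ i : ι, (Finset.Ico (c * m i) (c * (m i + 1))).card = c.toNat := by
    intro i
    rw [Int.card_Ico]
    congr 1
    ring
  rw [Finset.prod_congr rfl (fun i _ => this i)]
  simp [Finset.prod_const, Finset.card_univ]

end Counting

lemma ncard_le_diff_add {α : Type*} {A B : Set α} (hA : A.Finite) :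
    A.ncard ≤ (A \ B).ncard + (B ∩ A).ncard := by
  have hsub : A ⊆ (A \ B) ∪ (B ∩ A) := by
    intro x hx
    by_cases hB : x ∈ B
    · exact Or.inr ⟨hB, hx⟩
    · exact Or.inl ⟨hx, hB⟩
  calc A.ncard ≤ ((A \ B) ∪ (B ∩ A)).ncard :=
        Set.ncard_le_ncard hsub ((hA.diff).union (hA.inter_of_right _))
    _ ≤ (A \ B).ncard + (B ∩ A).ncard := Set.ncard_union_le _ _

lemma ncard_le_one_of_subset_singleton {α : Type*} {A : Set α} {a : α} (h : A ⊆ {a}) :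
    A.ncard ≤ 1 := by
  calc A.ncard ≤ ({a} : Set α).ncard := Set.ncard_le_ncard h (Set.finite_singleton a)
    _ = 1 := Set.ncard_singleton a

/-- rpow of a dyadic length. -/
lemma dyadic_rpow (a : ℕ) (s : ℝ) :
    ((2:ℝ) ^ (-(a:ℤ))) ^ s = (2:ℝ) ^ (-(a:ℝ) * s) := by
  have h1 : ((2:ℝ) ^ (-(a:ℤ))) = (2:ℝ) ^ ((-(a:ℤ) : ℤ) : ℝ) := (Real.rpow_intCast 2 _).symm
  rw [h1, ← Real.rpow_mul (by norm_num : (0:ℝ) ≤ 2)]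
  push_cast
  ring_nf

lemma dyadic_le_dyadic_iff {s t : ℝ} : (2:ℝ) ^ s ≤ (2:ℝ) ^ t ↔ s ≤ t :=
  Real.rpow_le_rpow_left_iff one_lt_two

lemma dyadic_pos (s : ℝ) : (0:ℝ) < (2:ℝ) ^ s := Real.rpow_pos_of_pos two_pos s


section Step

/-- The key one-step selection lemma: from the index set `Sj` of the previous level,
select one subcube of sidelength `2^{-A}` inside each cube of sidelength `2^{-R}`,
avoiding all bad cubes. -/
lemma step_lemma (d n : ℕ) (hn : 1 ≤ n) (A b R : ℕ) (hbR : b ≤ R) (hRA : R ≤ A)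
    (Bad : Finset (Fin n × Fin d → ℤ))
    (hBadSND : ∀ Mb ∈ Bad, StronglyNonDiagonal Mb)
    (hbud : 2 * Bad.card ≤ 2 ^ ((R - b) * d) * 2 ^ ((A - R) * (d * n)))
    (Sj : Set (Fin d → ℤ)) (hSjne : Sj.Nonempty)
    (hSjbox : ∀ m ∈ Sj, Rel ((2:ℤ) ^ b) 0 m) :
    ∃ Sk : Set (Fin d → ℤ),
      (∀ M ∈ Sk, ∃ m ∈ Sj, Rel ((2:ℤ) ^ (A - b)) m M) ∧
      (∀ m ∈ Sj, (2 ^ ((R - b) * d) : ℕ) ≤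
        2 * {M | M ∈ Sk ∧ Rel ((2:ℤ) ^ (A - b)) m M}.ncard) ∧
      (∀ q : Fin d → ℤ, {M | M ∈ Sk ∧ Rel ((2:ℤ) ^ (A - R)) q M}.ncard ≤ 1) ∧
      (∀ Mb ∈ Bad, ∃ jj : Fin n, cubeRow Mb jj ∉ Sk) ∧
      Sk.Nonempty := by
  classical
  haveI : NeZero n := ⟨by omega⟩
  have hRpos : (0:ℕ) < 2 ^ R := pow_pos (by norm_num) R
  have hT'pos : (0:ℕ) < 2 ^ (A - R) := pow_pos (by norm_num) (A - R)
  have hT'posZ : (0:ℤ) < ((2:ℕ) ^ (A - R) : ℤ) := by exact_mod_cast hT'pos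
  have hupos : (0:ℤ) < (2:ℤ) ^ (R - b) := by positivity
  have hcposZ : (0:ℤ) < (2:ℤ) ^ (A - b) := by positivity
  have hbA : b ≤ A := le_trans hbR hRA
  have hTu : ((2:ℕ) ^ (A - R) : ℤ) * (2:ℤ) ^ (R - b) = (2:ℤ) ^ (A - b) := by
    push_cast
    rw [← pow_add]
    congr 1
    omega
  -- the space of selections
  set D := (Fin d → Fin (2 ^ R)) → (Fin d → Fin (2 ^ (A - R))) with hD
  haveI : Nonempty (Fin (2 ^ (A - R))) := ⟨⟨0, hT'pos⟩⟩
  haveI : Nonempty D := ⟨fun _ _ => Classical.arbitrary _⟩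
  let toFin : (Fin d → ℤ) → (Fin d → Fin (2 ^ R)) :=
    fun q i => ⟨(q i).toNat % 2 ^ R, Nat.mod_lt _ hRpos⟩
  have toFin_inj : ∀ q q' : Fin d → ℤ, Rel ((2:ℤ) ^ R) 0 q → Rel ((2:ℤ) ^ R) 0 q' →
      toFin q = toFin q' → q = q' := by
    intro q q' hq hq' h
    funext i
    have h1 := hq i
    have h2 := hq' i
    simp only [Pi.zero_apply, mul_zero, mul_one] at h1 h2
    have e := congrFun h i
    simp only [toFin, Fin.mk.injEq] at e
    have b1 : (q i).toNat < 2 ^ R := by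
      have : q i < ((2:ℕ) ^ R : ℤ) := by push_cast; omega
      omega
    have b2 : (q' i).toNat < 2 ^ R := by
      have : q' i < ((2:ℕ) ^ R : ℤ) := by push_cast; omega
      omega
    rw [Nat.mod_eq_of_lt b1, Nat.mod_eq_of_lt b2] at e
    omega
  let extσ : D → (Fin d → ℤ) → (Fin d → ℤ) := fun σ q i => ((σ (toFin q) i : ℕ) : ℤ)
  have hext_range : ∀ σ q i, 0 ≤ extσ σ q i ∧ extσ σ q i < ((2:ℕ) ^ (A - R) : ℤ) := by
    intro σ q i
    simp only [extσ]
    constructor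
    · exact Int.natCast_nonneg _
    · exact_mod_cast (σ (toFin q) i).isLt
  let chosen : D → (Fin d → ℤ) → (Fin d → ℤ) :=
    fun σ q i => ((2:ℕ) ^ (A - R) : ℤ) * q i + extσ σ q i
  have hrel_chosen : ∀ σ q, Rel ((2:ℤ) ^ (A - R)) q (chosen σ q) := by
    intro σ q i
    obtain ⟨h1, h2⟩ := hext_range σ q i
    constructor
    · simp only [chosen]
      push_cast
      nlinarith []
    · simp only [chosen]
      push_cast
      push_cast at h2
      nlinarith []
  have hchosen_inj : ∀ σ, Function.Injective (chosen σ) := by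
    intro σ q q' h
    have h1 := hrel_chosen σ q
    have h2 := hrel_chosen σ q'
    rw [h] at h1
    have := Rel.unique (by positivity) h1 h2
    exact this
  -- uniqueness of the q-index of a chosen cube
  have hchosen_q : ∀ σ q q' , Rel ((2:ℤ) ^ (A - R)) q' (chosen σ q) → q' = q := by
    intro σ q q' h
    exact Rel.unique (by positivity) h (hrel_chosen σ q)
  set Chosen : D → Set (Fin d → ℤ) := fun σ =>
    {M | (∃ m ∈ Sj, Rel ((2:ℤ) ^ (A - b)) m M) ∧ ∃ q, M = chosen σ q} with hChosen
  set Psurv : D → (Fin n × Fin d → ℤ) → Prop :=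
    fun σ Mb => ∀ jj : Fin n, cubeRow Mb jj ∈ Chosen σ with hPsurv
  set SurvFin : D → Finset (Fin n × Fin d → ℤ) := fun σ => Bad.filter (Psurv σ) with hSurvFin
  set K : ℕ := (2 ^ (A - R)) ^ (d * n) with hK
  -- counting selections that keep a given bad cube alive
  have hMb_bound : ∀ Mb ∈ Bad,
      (Finset.univ.filter (fun σ : D => Psurv σ Mb)).card * K ≤ Fintype.card D := by
    intro Mb hMb
    set A' := Finset.univ.filter (fun σ : D => Psurv σ Mb) with hA'
    rcases A'.eq_empty_or_nonempty with hE | ⟨σ₀, hσ₀⟩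
    · rw [hE]
      simp
    · have hσ₀s : Psurv σ₀ Mb := (Finset.mem_filter.1 hσ₀).2
      choose q hq using fun jj : Fin n => (hσ₀s jj).2
      -- each row is in the unit box at level A, hence its q-index is in the box at level R
      have hrowbox : ∀ jj : Fin n, Rel ((2:ℤ) ^ A) 0 (cubeRow Mb jj) := by
        intro jj
        obtain ⟨⟨m, hm, hrel⟩, _⟩ := hσ₀s jj
        have h0 : Rel ((2:ℤ) ^ b) 0 m := hSjbox m hm
        have := Rel.comp hcposZ h0 hrel
        have harith : (2:ℤ) ^ (A - b) * (2:ℤ) ^ b = (2:ℤ) ^ A := by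
          rw [← pow_add]; congr 1; omega
        rwa [harith] at this
      have hqbox : ∀ jj : Fin n, Rel ((2:ℤ) ^ R) 0 (q jj) := by
        intro jj
        have h1 : Rel (((2:ℕ) ^ (A - R) : ℤ)) (q jj) (cubeRow Mb jj) := by
          rw [hq jj]; exact hrel_chosen σ₀ (q jj)
        have h2 : Rel (((2:ℕ) ^ (A - R) : ℤ) * (2:ℤ) ^ R) 0 (cubeRow Mb jj) := by
          have harith : ((2:ℕ) ^ (A - R) : ℤ) * (2:ℤ) ^ R = (2:ℤ) ^ A := by
            push_cast; rw [← pow_add]; congr 1; omega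
          rw [harith]; exact hrowbox jj
        exact Rel.factor hT'posZ h1 h2
      set qh : Fin n → (Fin d → Fin (2 ^ R)) := fun jj => toFin (q jj) with hqh
      have hqinj : Function.Injective q := by
        intro jj jj' h
        have e1 : cubeRow Mb jj = cubeRow Mb jj' := by rw [hq jj, hq jj', h]
        exact hBadSND Mb hMb e1
      have hqhinj : Function.Injective qh := by
        intro jj jj' h
        exact hqinj (toFin_inj _ _ (hqbox jj) (hqbox jj') h)
      -- all surviving selections agree on the qh's
      have hσval : ∀ σ ∈ A', ∀ jj : Fin n, σ (qh jj) = σ₀ (qh jj) := by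
        intro σ hσ jj
        have hs : Psurv σ Mb := (Finset.mem_filter.1 hσ).2
        obtain ⟨_, q', hq'⟩ := hs jj
        have hq'e : q' = q jj := by
          apply hchosen_q σ₀ (q jj) q'
          rw [← hq jj, hq']
          exact hrel_chosen σ q' 
        rw [hq'e] at hq'
        have e : chosen σ (q jj) = chosen σ₀ (q jj) := hq'.symm.trans (hq jj)
        funext i
        have e2 := congrFun e i
        simp only [chosen, extσ, add_right_inj] at e2
        simp only [hqh]
        exact Fin.ext (by exact_mod_cast e2)
      -- the injection
      let Φ : {σ : D // σ ∈ A'} × (Fin n → (Fin d → Fin (2 ^ (A - R)))) → D := fun p w =>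
        if h : ∃ jj, qh jj = w then p.2 h.choose else p.1.1 w
      have hΦinj : Function.Injective Φ := by
        rintro ⟨⟨σ, hσ⟩, τ⟩ ⟨⟨σ', hσ'⟩, τ'⟩ h
        have hval : ∀ jj : Fin n, τ jj = τ' jj := by
          intro jj
          have h1 := congrFun h (qh jj)
          have hex : ∃ jj', qh jj' = qh jj := ⟨jj, rfl⟩
          simp only [Φ, dif_pos hex] at h1
          have : hex.choose = jj := hqhinj hex.choose_spec
          rwa [this] at h1
        have hfun : σ = σ' := by
          funext w
          by_cases hw : ∃ jj, qh jj = w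
          · obtain ⟨jj, rfl⟩ := hw
            rw [hσval σ hσ jj, hσval σ' hσ' jj]
          · have h1 := congrFun h w
            simp only [Φ, dif_neg hw] at h1
            exact h1
        exact Prod.ext (Subtype.ext hfun) (funext hval)
      have hcards := Fintype.card_le_of_injective Φ hΦinj
      rw [Fintype.card_prod, Fintype.card_coe, Fintype.card_fun] at hcards
      have hOcard : Fintype.card (Fin d → Fin (2 ^ (A - R))) = 2 ^ ((A - R) * d) := by
        rw [Fintype.card_fun, Fintype.card_fin, Fintype.card_fin, ← pow_mul]
      rw [hOcard, Fintype.card_fin] at hcards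
      calc A'.card * K = A'.card * (2 ^ ((A - R) * d)) ^ n := by
            rw [hK, ← pow_mul]
            ring_nf
        _ ≤ Fintype.card D := hcards
  -- sum over all selections
  have hswap : ∑ σ : D, (SurvFin σ).card
      = ∑ Mb ∈ Bad, (Finset.univ.filter (fun σ : D => Psurv σ Mb)).card := by
    have h1 : ∀ σ : D, (SurvFin σ).card = ∑ Mb ∈ Bad, if Psurv σ Mb then 1 else 0 := by
      intro σ
      rw [hSurvFin]
      exact Finset.card_filter _ _
    have h2 : ∀ Mb, (Finset.univ.filter (fun σ : D => Psurv σ Mb)).card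
        = ∑ σ : D, if Psurv σ Mb then 1 else 0 := by
      intro Mb
      exact Finset.card_filter _ _
    simp_rw [h1, h2]
    exact Finset.sum_comm
  have hsum : ∑ σ : D, (SurvFin σ).card * K ≤ ∑ σ : D, Bad.card := by
    rw [← Finset.sum_mul, hswap, Finset.sum_const, Finset.card_univ, smul_eq_mul, Finset.sum_mul]
    calc (∑ Mb ∈ Bad, (Finset.univ.filter (fun σ : D => Psurv σ Mb)).card * K)
        ≤ ∑ _Mb ∈ Bad, Fintype.card D := Finset.sum_le_sum hMb_bound
      _ = Bad.card * Fintype.card D := by rw [Finset.sum_const, smul_eq_mul]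
      _ = Fintype.card D * Bad.card := mul_comm _ _
  obtain ⟨σs, _, hσs⟩ := Finset.exists_le_of_sum_le (Finset.univ_nonempty) hsum
  -- hσs : (SurvFin σs).card * K ≤ Bad.card
  have hSurv2 : 2 * (SurvFin σs).card ≤ 2 ^ ((R - b) * d) := by
    have h1 : 2 * ((SurvFin σs).card * K) ≤ 2 * Bad.card := by omega
    have h2 : 2 * (SurvFin σs).card * K ≤ 2 ^ ((R - b) * d) * K := by
      calc 2 * (SurvFin σs).card * K = 2 * ((SurvFin σs).card * K) := by ring
        _ ≤ 2 * Bad.card := h1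
        _ ≤ 2 ^ ((R - b) * d) * 2 ^ ((A - R) * (d * n)) := hbud
        _ = 2 ^ ((R - b) * d) * K := by rw [hK, ← pow_mul]
    have hKpos : 0 < K := by rw [hK]; positivity
    exact Nat.le_of_mul_le_mul_right h2 hKpos
  -- the final set
  set Rem : Set (Fin d → ℤ) := (fun Mb => cubeRow Mb 0) '' (↑(SurvFin σs) : Set (Fin n × Fin d → ℤ)) with hRem
  set Sk : Set (Fin d → ℤ) := Chosen σs \ Rem with hSk
  have hRemcard : Rem.ncard ≤ (SurvFin σs).card := by
    rw [hRem]
    calc ((fun Mb => cubeRow Mb 0) '' (↑(SurvFin σs) : Set (Fin n × Fin d → ℤ))).ncard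
        ≤ (↑(SurvFin σs) : Set (Fin n × Fin d → ℤ)).ncard := Set.ncard_image_le (SurvFin σs).finite_toSet
      _ = (SurvFin σs).card := Set.ncard_coe_finset _
  -- per-parent counting
  have hbox_eq : ∀ m ∈ Sj, {M | M ∈ Chosen σs ∧ Rel ((2:ℤ) ^ (A - b)) m M}
      = chosen σs '' {q | Rel ((2:ℤ) ^ (R - b)) m q} := by
    intro m hm
    ext M
    constructor
    · rintro ⟨⟨_, q, rfl⟩, hrel⟩
      refine ⟨q, ?_, rfl⟩
      have h1 := hrel_chosen σs q
      rw [← hTu] at hrel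
      exact Rel.factor hT'posZ h1 hrel
    · rintro ⟨q, hq, rfl⟩
      have h1 := hrel_chosen σs q
      have h2 : Rel (((2:ℕ) ^ (A - R) : ℤ) * (2:ℤ) ^ (R - b)) m (chosen σs q) :=
        Rel.comp hT'posZ hq h1
      rw [hTu] at h2
      exact ⟨⟨⟨m, hm, h2⟩, q, rfl⟩, h2⟩
  have hbox_card : ∀ m ∈ Sj, {M | M ∈ Chosen σs ∧ Rel ((2:ℤ) ^ (A - b)) m M}.ncard
      = 2 ^ ((R - b) * d) := by
    intro m hm
    rw [hbox_eq m hm, Set.ncard_image_of_injective _ (hchosen_inj σs),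
      ncard_rel _ (le_of_lt hupos)]
    have : ((2:ℤ) ^ (R - b)).toNat = 2 ^ (R - b) := by
      rw [show ((2:ℤ) ^ (R - b)) = ((2 ^ (R - b) : ℕ) : ℤ) by push_cast; ring]
      exact Int.toNat_natCast _
    rw [this, Fintype.card_fin, ← pow_mul]
  have hkept : ∀ m ∈ Sj, (2 ^ ((R - b) * d) : ℕ) ≤
      2 * {M | M ∈ Sk ∧ Rel ((2:ℤ) ^ (A - b)) m M}.ncard := by
    intro m hm
    have hCBfin : {M | M ∈ Chosen σs ∧ Rel ((2:ℤ) ^ (A - b)) m M}.Finite := by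
      rw [hbox_eq m hm]
      exact ((rel_finite _ _).image _)
    have hQeq : {M | M ∈ Sk ∧ Rel ((2:ℤ) ^ (A - b)) m M}
        = {M | M ∈ Chosen σs ∧ Rel ((2:ℤ) ^ (A - b)) m M} \ Rem := by
      ext M
      simp only [Set.mem_setOf_eq, Set.mem_diff, hSk, Set.mem_diff]
      tauto
    have h1 : {M | M ∈ Chosen σs ∧ Rel ((2:ℤ) ^ (A - b)) m M}.ncard
        ≤ ({M | M ∈ Chosen σs ∧ Rel ((2:ℤ) ^ (A - b)) m M} \ Rem).ncard
          + (Rem ∩ {M | M ∈ Chosen σs ∧ Rel ((2:ℤ) ^ (A - b)) m M}).ncard :=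
      ncard_le_diff_add hCBfin
    have h2 : (Rem ∩ {M | M ∈ Chosen σs ∧ Rel ((2:ℤ) ^ (A - b)) m M}).ncard
        ≤ (SurvFin σs).card := by
      calc (Rem ∩ {M | M ∈ Chosen σs ∧ Rel ((2:ℤ) ^ (A - b)) m M}).ncard ≤ Rem.ncard :=
            Set.ncard_le_ncard Set.inter_subset_left
              (((SurvFin σs).finite_toSet.image _))
        _ ≤ (SurvFin σs).card := hRemcard
    rw [hQeq]
    have h3 := hbox_card m hm
    have h4 := hSurv2
    set x1 := {M | M ∈ Chosen σs ∧ Rel ((2:ℤ) ^ (A - b)) m M}.ncard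
    set x2 := ({M | M ∈ Chosen σs ∧ Rel ((2:ℤ) ^ (A - b)) m M} \ Rem).ncard
    set x3 := (Rem ∩ {M | M ∈ Chosen σs ∧ Rel ((2:ℤ) ^ (A - b)) m M}).ncard
    set x4 := (SurvFin σs).card
    set x5 := (2:ℕ) ^ ((R - b) * d)
    clear_value x1 x2 x3 x4 x5
    omega
  refine ⟨Sk, ?_, hkept, ?_, ?_, ?_⟩
  · -- parents
    rintro M ⟨⟨⟨m, hm, hrel⟩, -⟩, -⟩
    exact ⟨m, hm, hrel⟩
  · -- non-concentration
    intro q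
    apply ncard_le_one_of_subset_singleton (a := chosen σs q)
    rintro M ⟨⟨⟨-, q', rfl⟩, -⟩, hrel⟩
    have : q = q' := hchosen_q σs q' q hrel
    rw [this]
    rfl
  · -- avoidance
    intro Mb hMb
    by_cases h : ∀ jj : Fin n, cubeRow Mb jj ∈ Chosen σs
    · refine ⟨0, ?_⟩
      have hmem : cubeRow Mb 0 ∈ Rem := by
        refine ⟨Mb, ?_, rfl⟩
        simp only [Finset.coe_filter, Set.mem_setOf_eq, hSurvFin]
        exact ⟨hMb, h⟩
      intro hc
      rw [hSk] at hc
      exact hc.2 hmem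
    · push_neg at h
      obtain ⟨jj, hjj⟩ := h
      refine ⟨jj, fun hc => hjj ?_⟩
      rw [hSk] at hc
      exact hc.1
  · -- nonempty
    obtain ⟨m, hm⟩ := hSjne
    have h5 := hkept m hm
    have hpos : 0 < (2:ℕ) ^ ((R - b) * d) := by positivity
    have h6 : 0 < 2 * {M | M ∈ Sk ∧ Rel ((2:ℤ) ^ (A - b)) m M}.ncard :=
      lt_of_lt_of_le hpos h5
    have h7 : {M | M ∈ Sk ∧ Rel ((2:ℤ) ^ (A - b)) m M}.ncard ≠ 0 := by omega
    obtain ⟨M, hM⟩ := Set.nonempty_of_ncard_ne_zero h7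
    exact ⟨M, hM.1⟩

end Step


lemma zpow_neg_eq_rpow (a : ℕ) : (2:ℝ) ^ (-(a:ℤ)) = (2:ℝ) ^ (-(a:ℝ)) := by
  rw [← Real.rpow_intCast]
  push_cast
  ring_nf

lemma dyadic_antitone {s t : ℕ} (h : s ≤ t) : (2:ℝ) ^ (-(t:ℤ)) ≤ (2:ℝ) ^ (-(s:ℤ)) := by
  rw [zpow_neg_eq_rpow, zpow_neg_eq_rpow]
  rw [dyadic_le_dyadic_iff]
  simp only [neg_le_neg_iff]
  exact_mod_cast h

lemma dyadic_le_one (a : ℕ) : (2:ℝ) ^ (-(a:ℤ)) ≤ 1 := by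
  have := dyadic_antitone (Nat.zero_le a)
  simpa using this

lemma dyadic_div {b R : ℕ} (h : b ≤ R) :
    (2:ℝ) ^ (-(b:ℤ)) / (2:ℝ) ^ (-(R:ℤ)) = (2:ℝ) ^ (R - b : ℕ) := by
  rw [← zpow_sub₀ (by norm_num : (2:ℝ) ≠ 0)]
  rw [show (-(b:ℤ) - -(R:ℤ)) = ((R - b : ℕ) : ℤ) by push_cast [Nat.cast_sub h]; ring]
  exact zpow_natCast 2 _

lemma nat_pow_eq_rpow (N : ℕ) : ((2 ^ N : ℕ) : ℝ) = (2:ℝ) ^ ((N : ℕ) : ℝ) := by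
  rw [Real.rpow_natCast]
  push_cast
  ring

lemma rpow_two_eq_four : (2:ℝ) ^ (2:ℝ) = 4 := by
  rw [show (2:ℝ) = ((2:ℕ):ℝ) from by norm_num, Real.rpow_natCast]
  norm_num

end NestedAux

set_option maxHeartbeats 2000000 in
open NestedAux in
/-- **Lemma 3.2 (construction of the nested sets `X_k`).** -/
theorem nested_construction (d n : ℕ) (hd : 1 ≤ d) (hn : 2 ≤ n) :
    ∃ C : ℝ, 0 < C ∧
      ∀ (α : ℝ), (d : ℝ) ≤ α → α < (d : ℝ) * n →
      ∀ (ε : ℕ → ℝ), (∀ k, 0 < ε k) → (∀ k, 0 < (d : ℝ) * n - α - 2 * ε k) →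
      ∀ (Zk : ℕ → Set (Fin n × Fin d → ℝ)),
        (∀ k, ∀ l : ℝ, IsDyadicLength l → l ≤ 1 →
          l ^ (-(d : ℝ)) ≤ (cubeCount l (Zk k) : ℝ)) →
      ∀ (l : ℕ → ℝ), (∀ k, IsDyadicLength (l k)) → l 0 = 1 →
        (∀ k, 1 ≤ k → (cubeCount (l k) (Zk k) : ℝ) ≤ (l k) ^ (-α - ε k / 2)) →
        (∀ k, 1 ≤ k → (l k) ^ ((d : ℝ) * n - α - ε k) ≤ (1 / 2) * (l (k - 1)) ^ ((d : ℝ) * n)) →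
        (∀ k, 1 ≤ k → (l k) ^ (ε k) ≤ (l (k - 1)) ^ (2 * (d : ℝ))) →
      ∃ X : ℕ → Set (Fin d → ℝ), ∃ r : ℕ → ℝ,
        X 0 = unitCube d ∧
        (∀ k, 1 ≤ k → (X k).Nonempty ∧ IsCubeUnion (l k) (X k) ∧ X k ⊆ X (k - 1)) ∧
        -- avoidance of strongly non-diagonal cubes of `B_{l_k}^{dn}(Z_k)`
        (∀ k, 1 ≤ k → ∀ M : Fin n × Fin d → ℤ, StronglyNonDiagonal M →
          M ∈ cubesMeeting (l k) (Zk k) → ¬ dyadicCube (l k) M ⊆ nthPower (X k)) ∧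
        -- the intermediate scales
        (∀ k, 1 ≤ k → IsDyadicLength (r k) ∧ l k ≤ r k ∧ r k ≤ l (k - 1) ∧
          r k ≤ C * (l k) ^ (((d : ℝ) * n - α - ε k) / ((d : ℝ) * ((n : ℝ) - 1)))) ∧
        -- large size
        (∀ k, 1 ≤ k → ∀ m ∈ cubesMeeting (l (k - 1)) (X (k - 1)),
          (1 / 2) * (l (k - 1) / r k) ^ d ≤
            (cubeCount (l k) (X k ∩ dyadicCube (l (k - 1)) m) : ℝ)) ∧
        -- non-concentration
        (∀ k, 1 ≤ k → ∀ m' ∈ cubesMeeting (r k) (X (k - 1)),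
          cubeCount (l k) (X k ∩ dyadicCube (r k) m') ≤ 1) := by

  classical
  haveI : NeZero n := ⟨by omega⟩
  refine ⟨4, by norm_num, ?_⟩
  intro α hαd hαn ε hεpos hεgap Zk hZlow l hldy hl0 hZcount hstep hεstep
  choose a ha using hldy
  have hn1 : 1 ≤ n := by omega
  have hd1 : (1:ℝ) ≤ (d:ℝ) := by exact_mod_cast hd
  have hn2 : (2:ℝ) ≤ (n:ℝ) := by exact_mod_cast hn
  have hden : (0:ℝ) < (d:ℝ) * ((n:ℝ) - 1) := by nlinarith
  have hlpos : ∀ k, 0 < l k := fun k => (ha k) ▸ two_zpow_pos (a k)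
  have hle1 : ∀ k, l k ≤ 1 := fun k => (ha k) ▸ dyadic_le_one (a k)
  have ha0 : a 0 = 0 := by
    have h1 : (2:ℝ) ^ (-(a 0 : ℤ)) = 1 := (ha 0).symm.trans hl0
    by_contra hne
    have h2 : 1 ≤ a 0 := Nat.one_le_iff_ne_zero.2 hne
    have h3 := dyadic_antitone h2
    rw [h1] at h3
    norm_num at h3
  -- finiteness of the families of cubes meeting `Z k`
  have hZfin : ∀ k, (cubesMeeting (l k) (Zk k)).Finite := by
    intro k
    rw [← Set.not_infinite]
    intro hinf
    have h0 := hZlow k (l k) ⟨a k, ha k⟩ (hle1 k)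
    have h1 : cubeCount (l k) (Zk k) = 0 := hinf.ncard
    rw [h1] at h0
    have h2 : (0:ℝ) < (l k) ^ (-(d:ℝ)) := Real.rpow_pos_of_pos (hlpos k) _
    norm_num at h0
    linarith [pow_pos (hlpos k) d]
  set BadFin : ℕ → Finset (Fin n × Fin d → ℤ) :=
    fun k => (hZfin k).toFinset.filter StronglyNonDiagonal with hBadFin
  have hBadcard : ∀ k, ((BadFin k).card : ℝ) ≤ (cubeCount (l k) (Zk k) : ℝ) := by
    intro k
    have h1 : (BadFin k).card ≤ (hZfin k).toFinset.card := Finset.card_filter_le _ _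
    have h2 : (hZfin k).toFinset.card = cubeCount (l k) (Zk k) :=
      (Set.ncard_eq_toFinset_card _ (hZfin k)).symm
    exact_mod_cast h2 ▸ h1
  have hSND' : ∀ k, ∀ Mb ∈ BadFin k, StronglyNonDiagonal Mb :=
    fun k Mb hMb => (Finset.mem_filter.1 hMb).2
  -- exponent inequalities from the hypotheses
  have hexp : ∀ k, 1 ≤ k →
      -((a k:ℝ)) * ((d:ℝ)*n - α - ε k) ≤ -((a (k-1):ℝ)) * ((d:ℝ)*n) - 1 ∧
      -((a k:ℝ)) * (ε k) ≤ -((a (k-1):ℝ)) * (2*(d:ℝ)) := by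
    intro k hk
    have h1 := hstep k hk
    have h2 := hεstep k hk
    rw [ha k, ha (k-1), dyadic_rpow, dyadic_rpow] at h1 h2
    constructor
    · rw [show (1/2:ℝ) * (2:ℝ)^(-(a (k-1):ℝ) * ((d:ℝ)*n)) =
          (2:ℝ)^(-(a (k-1):ℝ)*((d:ℝ)*n) - 1) from by
        rw [Real.rpow_sub two_pos, Real.rpow_one]; ring] at h1
      exact dyadic_le_dyadic_iff.1 h1
    · exact dyadic_le_dyadic_iff.1 h2
  -- the intermediate exponents
  set ρ : ℕ → ℕ := fun k =>
    ⌊((a k:ℝ)*((d:ℝ)*(n:ℝ) - α - ε k/2) - (a (k-1):ℝ)*(d:ℝ) - 1)/((d:ℝ)*((n:ℝ)-1))⌋₊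
    with hρdef
  have hnum : ∀ k, 1 ≤ k →
      a (k-1) ≤ ρ k ∧ ρ k ≤ a k ∧
      2 * (BadFin k).card ≤ 2^((ρ k - a (k-1))*d) * 2^((a k - ρ k)*(d*n)) ∧
      (2:ℝ)^(-(ρ k:ℤ)) ≤ 4 * (l k) ^ (((d:ℝ)*n - α - ε k)/((d:ℝ)*((n:ℝ)-1))) := by
    intro k hk
    obtain ⟨hN1, hN2⟩ := hexp k hk
    have hA0 : (0:ℝ) ≤ (a k:ℝ) := Nat.cast_nonneg _
    have hB0 : (0:ℝ) ≤ (a (k-1):ℝ) := Nat.cast_nonneg _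
    have he0 : (0:ℝ) < ε k := hεpos k
    have hgap := hεgap k
    have hN1' : (a (k-1):ℝ) * ((d:ℝ)*n) + 1 ≤ (a k:ℝ) * ((d:ℝ)*n - α - ε k) := by nlinarith
    have hN2' : 2*(d:ℝ)*(a (k-1):ℝ) ≤ (a k:ℝ) * ε k := by nlinarith
    set x := ((a k:ℝ)*((d:ℝ)*(n:ℝ) - α - ε k/2) - (a (k-1):ℝ)*(d:ℝ) - 1)/((d:ℝ)*((n:ℝ)-1))
      with hxdef
    have hρeq : ρ k = ⌊x⌋₊ := rfl
    have hxB : (a (k-1):ℝ) ≤ x := by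
      rw [hxdef, le_div_iff₀ hden]
      nlinarith [mul_nonneg hA0 he0.le]
    have hx0 : 0 ≤ x := le_trans hB0 hxB
    have hρb : a (k-1) ≤ ρ k := by rw [hρeq]; exact Nat.le_floor hxB
    have hxA : x ≤ (a k:ℝ) := by
      rw [hxdef, div_le_iff₀ hden]
      nlinarith [mul_nonneg hA0 (show (0:ℝ) ≤ α + ε k/2 - d by nlinarith)]
    have hρx : (ρ k:ℝ) ≤ x := by rw [hρeq]; exact Nat.floor_le hx0
    have hρa : ρ k ≤ a k := by exact_mod_cast le_trans hρx hxA
    have hxmul : x * ((d:ℝ)*((n:ℝ)-1))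
        = (a k:ℝ)*((d:ℝ)*(n:ℝ) - α - ε k/2) - (a (k-1):ℝ)*(d:ℝ) - 1 := by
      rw [hxdef]; exact div_mul_cancel₀ _ hden.ne'
    have hbudR : (a k:ℝ)*(α + ε k/2) + 1
        ≤ (((ρ k - a (k-1))*d + (a k - ρ k)*(d*n) : ℕ) : ℝ) := by
      push_cast [Nat.cast_sub hρb, Nat.cast_sub hρa]
      have h5 : (ρ k:ℝ) * ((d:ℝ)*((n:ℝ)-1)) ≤ x * ((d:ℝ)*((n:ℝ)-1)) :=
        mul_le_mul_of_nonneg_right hρx hden.le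
      rw [hxmul] at h5
      nlinarith
    have hbudN : 2 * (BadFin k).card ≤ 2^((ρ k - a (k-1))*d) * 2^((a k - ρ k)*(d*n)) := by
      have c1 : ((BadFin k).card : ℝ) ≤ (l k) ^ (-α - ε k/2) :=
        le_trans (hBadcard k) (hZcount k hk)
      rw [ha k, dyadic_rpow] at c1
      have c2 : (2:ℝ) * (2:ℝ)^(-(a k:ℝ)*(-α - ε k/2)) = (2:ℝ)^((a k:ℝ)*(α+ε k/2) + 1) := by
        rw [Real.rpow_add two_pos, Real.rpow_one,
          show -(a k:ℝ)*(-α-ε k/2) = (a k:ℝ)*(α+ε k/2) by ring]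
        ring
      have c3 : 2*((BadFin k).card:ℝ) ≤ (2:ℝ)^((a k:ℝ)*(α+ε k/2)+1) := by
        rw [← c2]; linarith
      have c4 : (2:ℝ)^((a k:ℝ)*(α+ε k/2)+1)
          ≤ (2:ℝ)^(((((ρ k - a (k-1))*d + (a k - ρ k)*(d*n) : ℕ)):ℕ):ℝ) :=
        dyadic_le_dyadic_iff.2 (by exact_mod_cast hbudR)
      have c5 : ((2*(BadFin k).card : ℕ) : ℝ)
          ≤ ((2^((ρ k - a (k-1))*d + (a k - ρ k)*(d*n)) : ℕ) : ℝ) := by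
        rw [nat_pow_eq_rpow, Nat.cast_mul, Nat.cast_ofNat]
        exact le_trans c3 c4
      have c6 : 2 * (BadFin k).card ≤ 2^((ρ k - a (k-1))*d + (a k - ρ k)*(d*n)) := by
        exact_mod_cast c5
      rwa [pow_add] at c6
    have hAθx : (a k:ℝ) * (((d:ℝ)*n - α - ε k)/((d:ℝ)*((n:ℝ)-1))) ≤ x + 1 := by
      have h6 : (a k:ℝ) * (((d:ℝ)*n - α - ε k)/((d:ℝ)*((n:ℝ)-1)))
          = ((a k:ℝ)*((d:ℝ)*n - α - ε k))/((d:ℝ)*((n:ℝ)-1)) := by ring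
      have h7 : x + 1 = ((a k:ℝ)*((d:ℝ)*(n:ℝ) - α - ε k/2) - (a (k-1):ℝ)*(d:ℝ) - 1
          + (d:ℝ)*((n:ℝ)-1))/((d:ℝ)*((n:ℝ)-1)) := by
        rw [hxdef]
        rw [div_add_one hden.ne']
      rw [h6, h7, div_le_div_iff_of_pos_right hden]
      nlinarith
    have hrθ : (2:ℝ)^(-(ρ k:ℤ)) ≤ 4 * (l k) ^ (((d:ℝ)*n - α - ε k)/((d:ℝ)*((n:ℝ)-1))) := by
      rw [zpow_neg_eq_rpow, ha k, dyadic_rpow]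
      have h8 : x - 1 < (ρ k:ℝ) := by rw [hρeq]; exact Nat.sub_one_lt_floor x
      have h9 : (2:ℝ)^(-(ρ k:ℝ)) ≤ (2:ℝ)^(1 - x) := dyadic_le_dyadic_iff.2 (by linarith)
      have h10 : (4:ℝ) * (2:ℝ)^(-(a k:ℝ)*(((d:ℝ)*n - α - ε k)/((d:ℝ)*((n:ℝ)-1))))
          = (2:ℝ)^(-(a k:ℝ)*(((d:ℝ)*n - α - ε k)/((d:ℝ)*((n:ℝ)-1))) + 2) := by
        rw [Real.rpow_add two_pos, rpow_two_eq_four]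
        ring
      rw [h10]
      refine le_trans h9 (dyadic_le_dyadic_iff.2 ?_)
      linarith
    exact ⟨hρb, hρa, hbudN, hrθ⟩
  have hρb' : ∀ j, a j ≤ ρ (j+1) := fun j => by
    have := (hnum (j+1) (by omega)).1
    simpa using this
  have hρa' : ∀ j, ρ (j+1) ≤ a (j+1) := fun j => (hnum (j+1) (by omega)).2.1
  have hbud' : ∀ j, 2 * (BadFin (j+1)).card
      ≤ 2^((ρ (j+1) - a j)*d) * 2^((a (j+1) - ρ (j+1))*(d*n)) := fun j => by
    have := (hnum (j+1) (by omega)).2.2.1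
    simpa using this
  -- construct the nested index sets by recursion with choice
  let S : ℕ → Set (Fin d → ℤ) := fun k =>
    Nat.rec ({0} : Set (Fin d → ℤ))
      (fun j Sj =>
        if h : Sj.Nonempty ∧ (∀ m ∈ Sj, NestedAux.Rel ((2:ℤ)^(a j)) 0 m) then
          (NestedAux.step_lemma d n hn1 (a (j+1)) (a j) (ρ (j+1)) (hρb' j) (hρa' j)
            (BadFin (j+1)) (hSND' (j+1)) (hbud' j) Sj h.1 h.2).choose
        else {0}) k
  have hSgood : ∀ j, (S j).Nonempty ∧ (∀ m ∈ S j, NestedAux.Rel ((2:ℤ)^(a j)) 0 m) := by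
    intro j
    induction j with
    | zero =>
      refine ⟨⟨0, rfl⟩, ?_⟩
      intro m hm
      have hm0 : m ∈ ({0} : Set (Fin d → ℤ)) := hm
      rw [Set.mem_singleton_iff] at hm0
      subst hm0
      intro i
      simp [ha0]
    | succ j ih =>
      have hred : S (j+1) = (NestedAux.step_lemma d n hn1 (a (j+1)) (a j) (ρ (j+1))
          (hρb' j) (hρa' j) (BadFin (j+1)) (hSND' (j+1)) (hbud' j) (S j) ih.1 ih.2).choose :=
        dif_pos ih
      have hspec := (NestedAux.step_lemma d n hn1 (a (j+1)) (a j) (ρ (j+1))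
          (hρb' j) (hρa' j) (BadFin (j+1)) (hSND' (j+1)) (hbud' j) (S j) ih.1 ih.2).choose_spec
      rw [← hred] at hspec
      refine ⟨hspec.2.2.2.2, ?_⟩
      intro M hM
      obtain ⟨m, hm, hrel⟩ := hspec.1 M hM
      have h0 := ih.2 m hm
      have h1 := NestedAux.Rel.comp (by positivity) h0 hrel
      rwa [show ((2:ℤ)^(a (j+1) - a j)) * (2:ℤ)^(a j) = (2:ℤ)^(a (j+1)) from by
        rw [← pow_add, Nat.sub_add_cancel (le_trans (hρb' j) (hρa' j))]] at h1
  have hSspec : ∀ j,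
      (∀ M ∈ S (j+1), ∃ m ∈ S j, NestedAux.Rel ((2:ℤ)^(a (j+1) - a j)) m M) ∧
      (∀ m ∈ S j, (2^((ρ (j+1) - a j)*d) : ℕ) ≤
        2 * {M | M ∈ S (j+1) ∧ NestedAux.Rel ((2:ℤ)^(a (j+1) - a j)) m M}.ncard) ∧
      (∀ q : Fin d → ℤ, {M | M ∈ S (j+1) ∧ NestedAux.Rel ((2:ℤ)^(a (j+1) - ρ (j+1))) q M}.ncard ≤ 1) ∧
      (∀ Mb ∈ BadFin (j+1), ∃ jj : Fin n, cubeRow Mb jj ∉ S (j+1)) ∧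
      (S (j+1)).Nonempty := by
    intro j
    have ih := hSgood j
    have hred : S (j+1) = (NestedAux.step_lemma d n hn1 (a (j+1)) (a j) (ρ (j+1))
        (hρb' j) (hρa' j) (BadFin (j+1)) (hSND' (j+1)) (hbud' j) (S j) ih.1 ih.2).choose :=
      dif_pos ih
    have hspec := (NestedAux.step_lemma d n hn1 (a (j+1)) (a j) (ρ (j+1))
        (hρb' j) (hρa' j) (BadFin (j+1)) (hSND' (j+1)) (hbud' j) (S j) ih.1 ih.2).choose_spec
    rw [← hred] at hspec
    exact hspec
  -- the sets and the intermediate scales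
  set X : ℕ → Set (Fin d → ℝ) := fun k => ⋃ m ∈ S k, dyadicCube (l k) m with hXdef
  set rr : ℕ → ℝ := fun k => (2:ℝ)^(-(ρ k:ℤ)) with hrrdef
  have hXmem : ∀ k (x : Fin d → ℝ), x ∈ X k ↔ idx (a k) x ∈ S k := by
    intro k x
    constructor
    · intro hx
      rw [hXdef, Set.mem_iUnion₂] at hx
      obtain ⟨m, hm, hx⟩ := hx
      rw [ha k, mem_cube_iff] at hx
      rwa [hx]
    · intro hx
      rw [hXdef, Set.mem_iUnion₂]
      exact ⟨idx (a k) x, hx, by rw [ha k]; exact mem_cube_iff.2 rfl⟩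
  have hmeet : ∀ k, cubesMeeting (l k) (X k) = S k := by
    intro k
    rw [ha k, cubesMeeting_eq]
    ext m
    constructor
    · rintro ⟨x, hxX, rfl⟩
      exact (hXmem k x).1 hxX
    · intro hm
      exact ⟨corner (a k) m, (hXmem k _).2 (by rw [idx_corner]; exact hm), idx_corner _ _⟩
  have hinter : ∀ (k b' : ℕ), b' ≤ a k → ∀ m : Fin d → ℤ,
      cubeCount (l k) (X k ∩ dyadicCube ((2:ℝ)^(-(b':ℤ))) m)
        = {M | M ∈ S k ∧ NestedAux.Rel ((2:ℤ)^(a k - b')) m M}.ncard := by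
    intro k b' hb' m
    have hset : X k ∩ dyadicCube ((2:ℝ)^(-(b':ℤ))) m
        = idx (a k) ⁻¹' {M | M ∈ S k ∧ NestedAux.Rel ((2:ℤ)^(a k - b')) m M} := by
      ext x
      simp only [Set.mem_inter_iff, Set.mem_preimage, Set.mem_setOf_eq]
      rw [hXmem k x, mem_cube_iff]
      constructor
      · rintro ⟨h1, h2⟩
        exact ⟨h1, h2 ▸ rel_idx hb' x⟩
      · rintro ⟨h1, h2⟩
        exact ⟨h1, NestedAux.Rel.unique (by positivity) (rel_idx hb' x) h2⟩
    rw [cubeCount, ha k, cubesMeeting_eq, hset]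
    congr 1
    apply Set.Subset.antisymm (Set.image_preimage_subset _ _)
    intro M hM
    exact ⟨corner (a k) M, by rw [Set.mem_preimage, idx_corner]; exact hM, idx_corner _ _⟩
  refine ⟨X, rr, ?_, ?_, ?_, ?_, ?_, ?_⟩
  · -- X 0 = unit cube
    ext x
    rw [hXmem 0 x, ha0]
    simp only [Set.mem_singleton_iff, unitCube, Set.mem_setOf_eq, Set.mem_Ico]
    have hiff : ∀ y : ℝ, ⌊y * 2^(0:ℕ)⌋ = 0 ↔ 0 ≤ y ∧ y < 1 := by
      intro y
      rw [pow_zero, mul_one, Int.floor_eq_iff]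
      norm_num
    constructor
    · intro h i
      have := congrFun h i
      simp only [idx, Pi.zero_apply] at this
      exact (hiff (x i)).1 this
    · intro h
      funext i
      simp only [idx, Pi.zero_apply]
      exact (hiff (x i)).2 (h i)
  · -- nonempty, cube union, nested
    intro k hk
    obtain ⟨j, rfl⟩ : ∃ j, k = j + 1 := ⟨k - 1, by omega⟩
    refine ⟨?_, ⟨S (j+1), rfl⟩, ?_⟩
    · obtain ⟨m, hm⟩ := (hSgood (j+1)).1
      refine ⟨corner (a (j+1)) m, (hXmem (j+1) _).2 ?_⟩
      rw [idx_corner]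
      exact hm
    · simp only [Nat.add_sub_cancel]
      intro x hx
      rw [hXmem (j+1) x] at hx
      obtain ⟨m, hm, hrel⟩ := (hSspec j).1 _ hx
      have h1 := rel_idx (le_trans (hρb' j) (hρa' j)) x
      have h2 : idx (a j) x = m := NestedAux.Rel.unique (by positivity) h1 hrel
      rw [hXmem j x]
      exact h2 ▸ hm
  · -- avoidance
    intro k hk M hSND hMmeet
    obtain ⟨j, rfl⟩ : ∃ j, k = j + 1 := ⟨k - 1, by omega⟩
    intro hsub
    have hMb : M ∈ BadFin (j+1) := by
      rw [hBadFin, Finset.mem_filter]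
      exact ⟨(hZfin (j+1)).mem_toFinset.2 hMmeet, hSND⟩
    obtain ⟨jj, hjj⟩ := (hSspec j).2.2.2.1 M hMb
    apply hjj
    have hy : corner (a (j+1)) M ∈ dyadicCube (l (j+1)) M := by
      rw [ha (j+1)]; exact corner_mem _ _
    have hz : (fun i => corner (a (j+1)) M (jj, i)) ∈ X (j+1) := hsub hy jj
    have hz2 : corner (a (j+1)) (cubeRow M jj) ∈ X (j+1) := hz
    rw [hXmem (j+1) _, idx_corner] at hz2
    exact hz2
  · -- the intermediate scales
    intro k hk
    obtain ⟨j, rfl⟩ : ∃ j, k = j + 1 := ⟨k - 1, by omega⟩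
    refine ⟨⟨ρ (j+1), rfl⟩, ?_, ?_, ?_⟩
    · rw [ha (j+1)]
      exact dyadic_antitone (hρa' j)
    · simp only [Nat.add_sub_cancel]
      rw [ha j]
      exact dyadic_antitone (hρb' j)
    · exact (hnum (j+1) (by omega)).2.2.2
  · -- large size
    intro k hk m hmmeet
    obtain ⟨j, rfl⟩ : ∃ j, k = j + 1 := ⟨k - 1, by omega⟩
    simp only [Nat.add_sub_cancel] at hmmeet ⊢
    have hm : m ∈ S j := by rw [← hmeet j]; exact hmmeet
    have hcnt : cubeCount (l (j+1)) (X (j+1) ∩ dyadicCube (l j) m)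
        = {M | M ∈ S (j+1) ∧ NestedAux.Rel ((2:ℤ)^(a (j+1) - a j)) m M}.ncard := by
      rw [ha j]
      exact hinter (j+1) (a j) (le_trans (hρb' j) (hρa' j)) m
    rw [hcnt]
    have hbound := (hSspec j).2.1 m hm
    have hdiv : l j / rr (j+1) = (2:ℝ)^((ρ (j+1) - a j : ℕ)) := by
      rw [ha j, hrrdef]
      exact dyadic_div (hρb' j)
    rw [hdiv, ← pow_mul]
    have hcast : ((2:ℝ)^((ρ (j+1) - a j)*d)) = ((2^((ρ (j+1) - a j)*d) : ℕ) : ℝ) := by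
      push_cast; ring
    rw [hcast]
    have hbr : ((2^((ρ (j+1) - a j)*d) : ℕ) : ℝ)
        ≤ 2 * ({M | M ∈ S (j+1) ∧ NestedAux.Rel ((2:ℤ)^(a (j+1) - a j)) m M}.ncard : ℝ) := by
      exact_mod_cast hbound
    linarith
  · -- non-concentration
    intro k hk m' hm'
    obtain ⟨j, rfl⟩ : ∃ j, k = j + 1 := ⟨k - 1, by omega⟩
    have hcnt : cubeCount (l (j+1)) (X (j+1) ∩ dyadicCube (rr (j+1)) m')
        = {M | M ∈ S (j+1) ∧ NestedAux.Rel ((2:ℤ)^(a (j+1) - ρ (j+1))) m' M}.ncard := by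
      rw [hrrdef]
      exact hinter (j+1) (ρ (j+1)) (hρa' j) m'
    rw [hcnt]
    exact (hSspec j).2.2.1 m'


end
end

section
/- Assume the Setup. Then for every ε > 0 there exists a constant C_ε > 0 such that for every dyadic length l ∈ (0,1] and every cube I ∈ B_l^d, μ(I) ≤ C_ε · l^{(dn−α)/(n−1) − ε}. Consequently, by Frostman's lemma, the set X = ⋂_k X_k on which μ is supported has Hausdorff dimension at least (dn−α)/(n−1). -/
open Filter Set

noncomputable section

/- ================= Auxiliary material ================= -/

open MeasureTheory
open scoped ENNReal NNReal

namespace DyHelp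

lemma floorDiv (a : ℝ) (N : ℕ) (hN : 0 < N) : ⌊a / (N:ℝ)⌋ = ⌊a⌋ / (N:ℤ) := by
  have hN' : (0:ℝ) < N := by exact_mod_cast hN
  have hNz : (N:ℤ) ≠ 0 := by exact_mod_cast hN.ne'
  have hdm : (N:ℤ) * (⌊a⌋ / N) + ⌊a⌋ % N = ⌊a⌋ := Int.mul_ediv_add_emod _ _
  have hr0 : 0 ≤ ⌊a⌋ % N := Int.emod_nonneg _ hNz
  have hr1 : ⌊a⌋ % N < N := Int.emod_lt_of_pos _ (by exact_mod_cast hN)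
  have hfl : (⌊a⌋ : ℝ) ≤ a := Int.floor_le a
  have hfu : a < ⌊a⌋ + 1 := Int.lt_floor_add_one a
  have h1 : ((N * (⌊a⌋ / N) : ℤ) : ℝ) ≤ ((⌊a⌋ : ℤ) : ℝ) := by exact_mod_cast by omega
  have h2 : ((⌊a⌋ : ℤ) : ℝ) + 1 ≤ ((N * (⌊a⌋ / N + 1) : ℤ) : ℝ) := by exact_mod_cast by nlinarith
  rw [Int.cast_mul, Int.cast_natCast] at h1
  rw [Int.cast_mul, Int.cast_natCast, Int.cast_add, Int.cast_one] at h2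
  rw [Int.floor_eq_iff]
  exact ⟨by rw [le_div_iff₀ hN']; linarith, by rw [div_lt_iff₀ hN']; nlinarith⟩

variable {d : ℕ}

def idx (l : ℝ) (x : Fin d → ℝ) : Fin d → ℤ := fun i => ⌊x i / l⌋

lemma mem_cube_iff {l : ℝ} (hl : 0 < l) {m : Fin d → ℤ} {x : Fin d → ℝ} :
    x ∈ dyadicCube l m ↔ ∀ i, ⌊x i / l⌋ = m i := by
  refine forall_congr' fun i => ?_
  rw [Int.floor_eq_iff]
  constructor
  · rintro ⟨h1, h2⟩
    exact ⟨by rw [le_div_iff₀ hl]; linarith, by rw [div_lt_iff₀ hl]; linarith⟩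
  · rintro ⟨h1, h2⟩
    rw [le_div_iff₀ hl] at h1; rw [div_lt_iff₀ hl] at h2
    exact ⟨by linarith, by linarith⟩

lemma self_mem_cube {l : ℝ} (hl : 0 < l) (x : Fin d → ℝ) : x ∈ dyadicCube l (idx l x) :=
  (mem_cube_iff hl).2 fun _ => rfl

lemma cube_nonempty {l : ℝ} (hl : 0 < l) (m : Fin d → ℤ) : (dyadicCube l m).Nonempty := by
  refine ⟨fun i => l * m i, fun i => ⟨le_refl _, ?_⟩⟩
  dsimp only
  nlinarith [hl, (by linarith : (m i : ℝ) < m i + 1)]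

lemma cube_idx_eq {l : ℝ} (hl : 0 < l) {m m' : Fin d → ℤ} {x : Fin d → ℝ}
    (h : x ∈ dyadicCube l m) (h' : x ∈ dyadicCube l m') : m = m' := by
  funext i
  rw [← (mem_cube_iff hl).1 h i, (mem_cube_iff hl).1 h' i]

lemma cube_measurable (l : ℝ) (m : Fin d → ℤ) : MeasurableSet (dyadicCube l m) := by
  have : dyadicCube l m = Set.pi Set.univ (fun i => Set.Ico (l * m i) (l * (m i + 1))) := by
    ext x; simp [dyadicCube, Set.mem_pi]
  rw [this]
  exact MeasurableSet.pi Set.countable_univ fun i _ => measurableSet_Ico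

lemma floor_scale {l' l : ℝ} (hl' : 0 < l') {N : ℕ} (hN : 0 < N) (hll : l = N * l') (a : ℝ) :
    ⌊a / l⌋ = ⌊a / l'⌋ / (N : ℤ) := by
  rw [hll, show a / ((N:ℝ) * l') = a / l' / N by rw [div_div]; ring_nf, floorDiv _ _ hN]

lemma cube_subset_coarse {l' l : ℝ} (hl' : 0 < l') {N : ℕ} (hN : 0 < N) (hll : l = N * l')
    (m' : Fin d → ℤ) : dyadicCube l' m' ⊆ dyadicCube l (fun i => m' i / (N : ℤ)) := by
  have hN' : (0:ℝ) < N := by exact_mod_cast hN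
  have hl : 0 < l := by rw [hll]; positivity
  intro y hy
  rw [mem_cube_iff hl]
  intro i
  rw [floor_scale hl' hN hll, (mem_cube_iff hl').1 hy i]

lemma cube_subset_of_inter {l' l : ℝ} (hl' : 0 < l') {N : ℕ} (hN : 0 < N) (hll : l = N * l')
    {m' : Fin d → ℤ} {m : Fin d → ℤ}
    (h : (dyadicCube l' m' ∩ dyadicCube l m).Nonempty) : dyadicCube l' m' ⊆ dyadicCube l m := by
  have hN' : (0:ℝ) < N := by exact_mod_cast hN
  have hl : 0 < l := by rw [hll]; positivity
  obtain ⟨z, hz1, hz2⟩ := h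
  have hsub := cube_subset_coarse hl' hN hll m'
  have heq : (fun i => m' i / (N:ℤ)) = m := cube_idx_eq hl (hsub hz1) hz2
  rwa [heq] at hsub

lemma counting_subset {l' l : ℝ} (hl' : 0 < l') {N : ℕ} (hN : 0 < N) (hll : l = N * l')
    (m : Fin d → ℤ) :
    {m' : Fin d → ℤ | dyadicCube l' m' ⊆ dyadicCube l m} ⊆
      ↑(Fintype.piFinset (fun i => Finset.Icc ((N:ℤ) * m i) ((N:ℤ) * m i + N - 1))) := by
  intro m' hm'
  simp only [Finset.coe_sort_coe, Fintype.mem_piFinset, Finset.mem_coe, Finset.mem_Icc]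
  intro i
  have hcorner : (fun j => l' * m' j) ∈ dyadicCube l' m' := by
    intro j
    refine ⟨le_refl _, ?_⟩
    dsimp only
    nlinarith [hl', (by linarith : (m' j : ℝ) < m' j + 1)]
  have hmem := hm' hcorner i
  obtain ⟨h1, h2⟩ := hmem
  rw [hll] at h1 h2
  have hN' : (0:ℝ) < N := by exact_mod_cast hN
  constructor
  · have : ((N:ℤ) * m i : ℝ) ≤ (m' i : ℝ) := by
      push_cast
      nlinarith
    exact_mod_cast this
  · have : (m' i : ℝ) < ((N:ℤ) * m i + N : ℝ) := by push_cast; nlinarith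
    have h3 : m' i < (N:ℤ) * m i + N := by exact_mod_cast this
    omega

lemma counting_card (N : ℕ) (m : Fin d → ℤ) :
    (Fintype.piFinset (fun i => Finset.Icc ((N:ℤ) * m i) ((N:ℤ) * m i + N - 1))).card = N ^ d := by
  rw [Fintype.card_piFinset]
  have : ∀ i, (Finset.Icc ((N:ℤ) * m i) ((N:ℤ) * m i + N - 1)).card = N := by
    intro i
    rw [Int.card_Icc]
    omega
  simp [this]

lemma dyadic_pos {x : ℝ} (hx : IsDyadicLength x) : 0 < x := by
  obtain ⟨k, rfl⟩ := hx; positivity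

lemma dyadic_le_one {x : ℝ} (hx : IsDyadicLength x) : x ≤ 1 := by
  obtain ⟨k, rfl⟩ := hx
  rw [show (1:ℝ) = 2 ^ (0:ℤ) by norm_num]
  apply zpow_le_zpow_right₀ (by norm_num)
  omega

lemma dyadic_ratio {x y : ℝ} (hx : IsDyadicLength x) (hy : IsDyadicLength y) (hxy : x ≤ y) :
    ∃ N : ℕ, 0 < N ∧ y = N * x := by
  obtain ⟨a, rfl⟩ := hx
  obtain ⟨b, rfl⟩ := hy
  have hab : b ≤ a := by
    by_contra hc
    push_neg at hc
    have : (2:ℝ) ^ (-(b:ℤ)) < 2 ^ (-(a:ℤ)) := by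
      apply zpow_lt_zpow_right₀ (by norm_num)
      omega
    linarith
  refine ⟨2 ^ (a - b), pow_pos (by norm_num) _, ?_⟩
  push_cast
  rw [← zpow_natCast (2:ℝ) (a - b), ← zpow_add₀ (by norm_num : (2:ℝ) ≠ 0)]
  congr 1
  omega

lemma unitCube_eq (d : ℕ) : unitCube d = dyadicCube 1 (fun _ => (0:ℤ)) := by
  ext x
  simp [unitCube, dyadicCube]

/-- dichotomy wrt unit cube -/
lemma cube_dich {lk : ℝ} (hlk : IsDyadicLength lk) (J : Fin d → ℤ) :
    dyadicCube lk J ⊆ unitCube d ∨ dyadicCube lk J ∩ unitCube d = ∅ := by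
  obtain ⟨N, hN, hNl⟩ := dyadic_ratio hlk ⟨0, by norm_num⟩ (dyadic_le_one hlk)
  rw [unitCube_eq]
  by_cases h : (dyadicCube lk J ∩ dyadicCube (1:ℝ) (fun _ => 0)).Nonempty
  · exact Or.inl (cube_subset_of_inter (dyadic_pos hlk) hN hNl h)
  · exact Or.inr (Set.not_nonempty_iff_eq_empty.1 h)

/-- The core covering/counting bound. -/
lemma core {μ : Measure (Fin d → ℝ)} {lk l' : ℝ} (hlkd : IsDyadicLength lk)
    (hl'd : IsDyadicLength l') (hlkl' : lk ≤ l')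
    {Xk : Set (Fin d → ℝ)}
    (hnull : ∀ J, dyadicCube lk J ⊆ unitCube d → ¬ dyadicCube lk J ⊆ Xk →
      μ (dyadicCube lk J) = 0)
    (hμ2 : μ (unitCube d)ᶜ = 0)
    {c : ℝ≥0∞} (hc : ∀ J, μ (dyadicCube lk J) ≤ c)
    (I : Fin d → ℤ) (Nt : ℕ)
    (hNt : ({J | (dyadicCube lk J ∩ Xk).Nonempty ∧ dyadicCube lk J ⊆ dyadicCube l' I}).ncard ≤ Nt) :
    μ (dyadicCube l' I) ≤ Nt * c := by
  have hlk := dyadic_pos hlkd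
  obtain ⟨N₀, hN₀, hN₀l⟩ := dyadic_ratio hlkd hl'd hlkl'
  set T : Set (Fin d → ℤ) :=
    {J | (dyadicCube lk J ∩ Xk).Nonempty ∧ dyadicCube lk J ⊆ dyadicCube l' I} with hT
  have hTfin : T.Finite := by
    apply Set.Finite.subset (Set.Finite.subset (Fintype.piFinset
      (fun i => Finset.Icc ((N₀:ℤ) * I i) ((N₀:ℤ) * I i + N₀ - 1))).finite_toSet
      (counting_subset hlk hN₀ hN₀l I))
    exact fun J hJ => hJ.2
  have hsplit : dyadicCube l' I ∩ unitCube d ⊆ (⋃ J ∈ T, dyadicCube lk J) ∪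
      (⋃ J ∈ (Tᶜ : Set (Fin d → ℤ)), dyadicCube lk J ∩ (dyadicCube l' I ∩ unitCube d)) := by
    intro x hx
    by_cases hJ : idx lk x ∈ T
    · exact Or.inl (Set.mem_biUnion hJ (self_mem_cube hlk x))
    · exact Or.inr (Set.mem_biUnion hJ ⟨self_mem_cube hlk x, hx⟩)
  have hbad : μ (⋃ J ∈ (Tᶜ : Set (Fin d → ℤ)),
      dyadicCube lk J ∩ (dyadicCube l' I ∩ unitCube d)) = 0 := by
    rw [measure_biUnion_null_iff (Set.to_countable _)]
    intro J hJ
    by_cases hne : (dyadicCube lk J ∩ dyadicCube l' I).Nonempty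
    · have hJI : dyadicCube lk J ⊆ dyadicCube l' I :=
        cube_subset_of_inter hlk hN₀ hN₀l hne
      rcases cube_dich hlkd J with hJu | hJdisj
      · by_cases hJX : dyadicCube lk J ⊆ Xk
        · refine absurd ?_ hJ
          obtain ⟨x, hx⟩ := cube_nonempty hlk (d := d) J
          exact ⟨⟨x, hx, hJX hx⟩, hJI⟩
        · exact measure_mono_null Set.inter_subset_left (hnull J hJu hJX)
      · refine measure_mono_null (fun x hx => ?_) (measure_empty (μ := μ))
        rw [← hJdisj]
        exact ⟨hx.1, hx.2.2⟩
    · rw [Set.not_nonempty_iff_eq_empty] at hne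
      refine measure_mono_null (fun x hx => ?_) (measure_empty (μ := μ))
      rw [← hne]
      exact ⟨hx.1, hx.2.1⟩
  have hgood : μ (⋃ J ∈ T, dyadicCube lk J) ≤ (Nt : ℝ≥0∞) * c := by
    have h1 : (⋃ J ∈ T, dyadicCube lk J) = ⋃ J ∈ hTfin.toFinset, dyadicCube lk J := by
      simp [Set.Finite.mem_toFinset]
    rw [h1]
    refine (measure_biUnion_finset_le _ _).trans ?_
    refine (Finset.sum_le_card_nsmul _ _ c (fun J _ => hc J)).trans ?_
    rw [nsmul_eq_mul]
    have hcard : (hTfin.toFinset.card : ℝ≥0∞) ≤ (Nt : ℝ≥0∞) := by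
      have h2 : hTfin.toFinset.card = T.ncard := by
        rw [Set.ncard_eq_toFinset_card _ hTfin]
      rw [h2]
      exact_mod_cast hNt
    exact mul_le_mul_left hcard c
  calc μ (dyadicCube l' I)
      ≤ μ (dyadicCube l' I ∩ unitCube d) + μ (dyadicCube l' I \ unitCube d) :=
        measure_le_inter_add_diff _ _ _
    _ ≤ μ (dyadicCube l' I ∩ unitCube d) + 0 := by
        gcongr
        exact le_of_eq (measure_mono_null (Set.diff_subset_compl _ _) hμ2)
    _ = μ (dyadicCube l' I ∩ unitCube d) := add_zero _
    _ ≤ μ ((⋃ J ∈ T, dyadicCube lk J) ∪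
        (⋃ J ∈ (Tᶜ : Set (Fin d → ℤ)), dyadicCube lk J ∩ (dyadicCube l' I ∩ unitCube d))) :=
        measure_mono hsplit
    _ ≤ μ (⋃ J ∈ T, dyadicCube lk J) + μ (⋃ J ∈ (Tᶜ : Set (Fin d → ℤ)),
        dyadicCube lk J ∩ (dyadicCube l' I ∩ unitCube d)) := measure_union_le _ _
    _ ≤ (Nt : ℝ≥0∞) * c + 0 := by rw [hbad]; gcongr
    _ = (Nt : ℝ≥0∞) * c := add_zero _

lemma count_one {lk rk l' : ℝ} (hlkd : IsDyadicLength lk) (hrkd : IsDyadicLength rk)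
    (hl'd : IsDyadicLength l') (hlr : lk ≤ rk) (hl'r : l' ≤ rk)
    {Xk : Set (Fin d → ℝ)}
    (hsep : ∀ m' : Fin d → ℤ, ∀ m₁, (dyadicCube lk m₁ ∩ Xk).Nonempty →
      ∀ m₂, (dyadicCube lk m₂ ∩ Xk).Nonempty → dyadicCube lk m₁ ⊆ dyadicCube rk m' →
      dyadicCube lk m₂ ⊆ dyadicCube rk m' → m₁ = m₂)
    (I : Fin d → ℤ) :
    ({J | (dyadicCube lk J ∩ Xk).Nonempty ∧ dyadicCube lk J ⊆ dyadicCube l' I}).ncard ≤ 1 := by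
  obtain ⟨N, hN, hNl⟩ := dyadic_ratio hl'd hrkd hl'r
  set T := {J | (dyadicCube lk J ∩ Xk).Nonempty ∧ dyadicCube lk J ⊆ dyadicCube l' I} with hT
  have hsub : dyadicCube l' I ⊆ dyadicCube rk (fun i => I i / (N:ℤ)) :=
    cube_subset_coarse (dyadic_pos hl'd) hN hNl I
  have hss : T.Subsingleton := by
    intro J₁ hJ₁ J₂ hJ₂
    exact hsep _ J₁ hJ₁.1 J₂ hJ₂.1 (hJ₁.2.trans hsub) (hJ₂.2.trans hsub)
  rcases T.eq_empty_or_nonempty with h | ⟨J₀, hJ₀⟩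
  · rw [h]; simp
  · have hs : T ⊆ {J₀} := fun J hJ => by rw [Set.mem_singleton_iff]; exact hss hJ hJ₀
    calc T.ncard ≤ ({J₀} : Set (Fin d → ℤ)).ncard :=
          Set.ncard_le_ncard hs (Set.finite_singleton _)
      _ = 1 := Set.ncard_singleton _

lemma count_many {lk rk l' : ℝ} (hlkd : IsDyadicLength lk) (hrkd : IsDyadicLength rk)
    (hl'd : IsDyadicLength l') (hlr : lk ≤ rk)
    {Xk : Set (Fin d → ℝ)}
    (hsep : ∀ m' : Fin d → ℤ, ∀ m₁, (dyadicCube lk m₁ ∩ Xk).Nonempty →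
      ∀ m₂, (dyadicCube lk m₂ ∩ Xk).Nonempty → dyadicCube lk m₁ ⊆ dyadicCube rk m' →
      dyadicCube lk m₂ ⊆ dyadicCube rk m' → m₁ = m₂)
    (I : Fin d → ℤ) {N : ℕ} (hN : 0 < N) (hNl : l' = N * rk) :
    ({J | (dyadicCube lk J ∩ Xk).Nonempty ∧ dyadicCube lk J ⊆ dyadicCube l' I}).ncard ≤ N ^ d := by
  have hlk := dyadic_pos hlkd
  have hrk := dyadic_pos hrkd
  obtain ⟨N₂, hN₂, hN₂l⟩ := dyadic_ratio hlkd hrkd hlr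
  set T := {J | (dyadicCube lk J ∩ Xk).Nonempty ∧ dyadicCube lk J ⊆ dyadicCube l' I} with hT
  set g : (Fin d → ℤ) → (Fin d → ℤ) := fun J => fun i => J i / (N₂ : ℤ) with hg
  have hgsub : ∀ J, dyadicCube lk J ⊆ dyadicCube rk (g J) :=
    fun J => cube_subset_coarse hlk hN₂ hN₂l J
  have hmaps : ∀ J ∈ T, g J ∈
      ↑(Fintype.piFinset (fun i => Finset.Icc ((N:ℤ) * I i) ((N:ℤ) * I i + N - 1))) := by
    intro J hJ
    apply counting_subset hrk hN hNl I
    apply cube_subset_of_inter hrk hN hNl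
    obtain ⟨x, hx⟩ := cube_nonempty hlk (d := d) J
    exact ⟨x, hgsub J hx, hJ.2 hx⟩
  have hinj : Set.InjOn g T := by
    intro J₁ hJ₁ J₂ hJ₂ heq
    refine hsep (g J₁) J₁ hJ₁.1 J₂ hJ₂.1 (hgsub J₁) ?_
    rw [heq]; exact hgsub J₂
  calc T.ncard ≤ (↑(Fintype.piFinset
        (fun i => Finset.Icc ((N:ℤ) * I i) ((N:ℤ) * I i + N - 1))) : Set (Fin d → ℤ)).ncard :=
        Set.ncard_le_ncard_of_injOn g hmaps hinj (Finset.finite_toSet _)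
    _ = N ^ d := by rw [Set.ncard_coe_finset, counting_card]

lemma realE1 (d n : ℕ) (hd : 1 ≤ d) (hn : 2 ≤ n) (α εk C₀ lk lk1 rk : ℝ)
    (hεk : 0 < εk) (hC₀ : 0 < C₀) (hlk : 0 < lk) (hlkle : lk ≤ 1) (hlk1 : 0 < lk1)
    (hrk : 0 < rk)
    (hquad : lk ^ εk ≤ lk1 ^ (2*(d:ℝ)))
    (hrsize : rk ≤ C₀ * lk ^ (((d:ℝ)*n - α - εk)/((d:ℝ)*((n:ℝ)-1)))) :
    (rk/lk1)^d ≤ C₀^d * lk ^ (((d:ℝ)*n - α)/((n:ℝ)-1) - 2*εk) := by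
  have hd' : (0:ℝ) < d := by exact_mod_cast hd
  have hn1 : (1:ℝ) ≤ (n:ℝ) - 1 := by
    have : (2:ℝ) ≤ n := by exact_mod_cast hn
    linarith
  set β := ((d:ℝ)*n - α - εk)/((d:ℝ)*((n:ℝ)-1)) with hβ
  have h1 : rk ^ d ≤ (C₀ * lk ^ β)^d :=
    pow_le_pow_left₀ hrk.le hrsize d
  have h2 : (C₀ * lk ^ β)^d = C₀^d * lk ^ (β * d) := by
    rw [mul_pow, ← Real.rpow_natCast (lk ^ β) d, ← Real.rpow_mul hlk.le]
  have hβd : β * d = ((d:ℝ)*n - α)/((n:ℝ)-1) - εk/((n:ℝ)-1) := by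
    rw [hβ]
    field_simp
  have h3 : lk ^ (εk/2) ≤ lk1 ^ (d:ℝ) := by
    have h := Real.rpow_le_rpow (Real.rpow_nonneg hlk.le _) hquad (by norm_num : (0:ℝ) ≤ 1/2)
    rw [← Real.rpow_mul hlk.le, ← Real.rpow_mul hlk1.le] at h
    rw [show εk * (1/2) = εk / 2 by ring] at h
    rw [show 2*(d:ℝ) * (1/2) = (d:ℝ) by ring] at h
    exact h
  have h4 : (lk1 ^ (d:ℝ))⁻¹ ≤ (lk ^ (εk/2))⁻¹ :=
    inv_anti₀ (Real.rpow_pos_of_pos hlk _) h3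
  have hexp : ((d:ℝ)*n - α)/((n:ℝ)-1) - 2*εk ≤ β * d - εk/2 := by
    rw [hβd]
    have : εk/((n:ℝ)-1) ≤ εk := div_le_self hεk.le hn1
    linarith
  calc (rk/lk1)^d = rk^d / lk1^d := div_pow _ _ _
    _ = rk^d * (lk1 ^ (d:ℝ))⁻¹ := by
        rw [div_eq_mul_inv, ← Real.rpow_natCast lk1 d]
    _ ≤ (C₀^d * lk ^ (β * d)) * (lk ^ (εk/2))⁻¹ := by
        apply mul_le_mul (h1.trans_eq h2) h4 (by positivity) (by positivity)
    _ = C₀^d * (lk ^ (β * d) * lk ^ (-(εk/2))) := by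
        rw [Real.rpow_neg hlk.le]; ring
    _ = C₀^d * lk ^ (β * d - εk/2) := by
        rw [← Real.rpow_add hlk]; ring_nf
    _ ≤ C₀^d * lk ^ (((d:ℝ)*n - α)/((n:ℝ)-1) - 2*εk) := by
        apply mul_le_mul_of_nonneg_left _ (by positivity)
        exact Real.rpow_le_rpow_of_exponent_ge hlk hlkle hexp

lemma realE3 (d : ℕ) (C₀ lk l' εk ε' s : ℝ) (hC₀ : 0 < C₀) (hlk : 0 < lk) (hlkl' : lk ≤ l')
    (hl'1 : l' ≤ 1) (hεk : 0 ≤ εk) (hεk' : 2*εk ≤ ε') (hε's : ε' ≤ s) :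
    2*C₀^d * lk ^ (s - 2*εk) ≤ 4*C₀^d * l' ^ (s - ε') := by
  have hl' : 0 < l' := lt_of_lt_of_le hlk hlkl'
  have h1 : lk ^ (s-2*εk) ≤ l' ^ (s-2*εk) :=
    Real.rpow_le_rpow hlk.le hlkl' (by linarith)
  have h2 : l' ^ (s-2*εk) ≤ l' ^ (s-ε') :=
    Real.rpow_le_rpow_of_exponent_ge hl' hl'1 (by linarith)
  have h3 : (0:ℝ) < C₀^d := pow_pos hC₀ _
  nlinarith [Real.rpow_nonneg hlk.le (s-2*εk)]

lemma realE2 (d : ℕ) (C₀ lk1 rk l' ε₁ ε' s : ℝ) (hC₀ : 0 < C₀) (hrk : 0 < rk)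
    (hl' : 0 < l') (hl'lk1 : l' ≤ lk1) (hlk1 : lk1 ≤ 1)
    (hsd : s ≤ (d:ℝ)) (hε' : 0 < ε') (hε's : ε' ≤ s) (hε₁ : 2*ε₁ ≤ ε') :
    (l'/rk)^d * ((rk/lk1)^d * (4*C₀^d * lk1 ^ (s - 2*ε₁))) ≤ 4*C₀^d * l' ^ (s - ε') := by
  have hlk1p : 0 < lk1 := lt_of_lt_of_le hl' hl'lk1
  have key : (l'/rk)^d * (rk/lk1)^d = (l'/lk1)^d := by
    rw [← mul_pow]
    congr 1
    field_simp
  have hq : 0 < l'/lk1 := div_pos hl' hlk1p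
  have h1 : (l'/lk1)^d ≤ (l'/lk1) ^ (s - ε') := by
    rw [← Real.rpow_natCast (l'/lk1) d]
    exact Real.rpow_le_rpow_of_exponent_ge hq (by rw [div_le_one hlk1p]; exact hl'lk1)
      (by linarith)
  have h2 : (l'/lk1) ^ (s-ε') * lk1 ^ (s-2*ε₁) = l' ^ (s-ε') * lk1 ^ (ε' - 2*ε₁) := by
    rw [Real.div_rpow hl'.le hlk1p.le, div_mul_eq_mul_div, div_eq_mul_inv,
      ← Real.rpow_neg hlk1p.le, mul_assoc, ← Real.rpow_add hlk1p]
    ring_nf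
  have h3 : lk1 ^ (ε' - 2*ε₁) ≤ 1 := Real.rpow_le_one hlk1p.le hlk1 (by linarith)
  have hC : (0:ℝ) < 4*C₀^d := by positivity
  calc (l'/rk)^d * ((rk/lk1)^d * (4*C₀^d * lk1 ^ (s - 2*ε₁)))
      = (l'/lk1)^d * (4*C₀^d * lk1 ^ (s-2*ε₁)) := by rw [← key]; ring
    _ ≤ (l'/lk1)^(s-ε') * (4*C₀^d * lk1 ^ (s-2*ε₁)) := by
        apply mul_le_mul_of_nonneg_right h1 (by positivity)
    _ = 4*C₀^d * (l' ^ (s-ε') * lk1 ^ (ε' - 2*ε₁)) := by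
        rw [← mul_assoc, mul_comm _ (4*C₀^d), mul_assoc, h2]
    _ ≤ 4*C₀^d * (l' ^ (s-ε') * 1) := by
        apply mul_le_mul_of_nonneg_left _ hC.le
        exact mul_le_mul_of_nonneg_left h3 (Real.rpow_nonneg hl'.le _)
    _ = 4*C₀^d * l' ^ (s - ε') := by ring

end DyHelp

open DyHelp

/-- **Lemma 4.3 and the dimension bound.** `μ` is a Frostman measure of every dimension
below `(dn-α)/(n-1)`, and hence `X = ⋂ X_k` has Hausdorff dimension at least `(dn-α)/(n-1)`. -/
theorem frostman_bound
    (d n : ℕ) (hd : 1 ≤ d) (hn : 2 ≤ n)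
    (α : ℝ) (hαd : (d : ℝ) ≤ α) (hαdn : α < (d : ℝ) * n)
    (ε : ℕ → ℝ) (hεpos : ∀ k, 0 < ε k) (hεlim : Filter.Tendsto ε Filter.atTop (nhds 0))
    (C₀ : ℝ) (hC₀ : 0 < C₀)
    (l : ℕ → ℝ) (hldyadic : ∀ k, IsDyadicLength (l k)) (hl0 : l 0 = 1)
    (hlanti : StrictAnti l) (hllim : Filter.Tendsto l Filter.atTop (nhds 0))
    (hlquad : ∀ k, 1 ≤ k → (l k) ^ (ε k) ≤ (l (k - 1)) ^ (2 * (d : ℝ)))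
    (r : ℕ → ℝ) (hrdyadic : ∀ k, 1 ≤ k → IsDyadicLength (r k))
    (hrlow : ∀ k, 1 ≤ k → l k ≤ r k) (hrhigh : ∀ k, 1 ≤ k → r k ≤ l (k - 1))
    (hrsize : ∀ k, 1 ≤ k →
      r k ≤ C₀ * (l k) ^ (((d : ℝ) * n - α - ε k) / ((d : ℝ) * ((n : ℝ) - 1))))
    (X : ℕ → Set (Fin d → ℝ)) (hX0 : X 0 = unitCube d)
    (hXmono : ∀ k, X (k + 1) ⊆ X k)
    (hXcube : ∀ k, (X k).Nonempty ∧ IsCubeUnion (l k) (X k))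
    (hXlarge : ∀ k, 1 ≤ k → ∀ m ∈ cubesMeeting (l (k - 1)) (X (k - 1)),
      (1 / 2) * (l (k - 1) / r k) ^ d ≤
        (cubeCount (l k) (X k ∩ dyadicCube (l (k - 1)) m) : ℝ))
    (hXsep : ∀ k, 1 ≤ k → ∀ m' : Fin d → ℤ, ∀ m₁ ∈ cubesMeeting (l k) (X k),
      ∀ m₂ ∈ cubesMeeting (l k) (X k), dyadicCube (l k) m₁ ⊆ dyadicCube (r k) m' →
        dyadicCube (l k) m₂ ⊆ dyadicCube (r k) m' → m₁ = m₂)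
    (μ : MeasureTheory.Measure (Fin d → ℝ))
    (hμ1 : μ (unitCube d) = 1) (hμ2 : μ (unitCube d)ᶜ = 0)
    (hμrec : ∀ k, 1 ≤ k → ∀ J : Fin d → ℤ, dyadicCube (l k) J ⊆ unitCube d →
      ∀ I : Fin d → ℤ, dyadicCube (l k) J ⊆ dyadicCube (l (k - 1)) I →
        (dyadicCube (l k) J ⊆ X k →
          μ (dyadicCube (l k) J) = μ (dyadicCube (l (k - 1)) I) /
            (cubeCount (l k) (X k ∩ dyadicCube (l (k - 1)) I) : ENNReal)) ∧
        (¬ dyadicCube (l k) J ⊆ X k → μ (dyadicCube (l k) J) = 0))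
    :
    (∀ ε' : ℝ, 0 < ε' → ∃ C : ℝ, 0 < C ∧
      ∀ l' : ℝ, IsDyadicLength l' → ∀ I : Fin d → ℤ,
        μ (dyadicCube l' I) ≤ ENNReal.ofReal (C *
          l' ^ (((d : ℝ) * n - α) / ((n : ℝ) - 1) - ε'))) ∧
    ENNReal.ofReal (((d : ℝ) * n - α) / ((n : ℝ) - 1)) ≤ dimH (⋂ k, X k) := by
  classical
  have hn2 : (2:ℝ) ≤ (n:ℝ) := by exact_mod_cast hn
  have hn1 : (1:ℝ) ≤ (n:ℝ) - 1 := by linarith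
  have hd1 : (1:ℝ) ≤ (d:ℝ) := by exact_mod_cast hd
  set s : ℝ := ((d:ℝ) * n - α) / ((n:ℝ) - 1) with hs_def
  have hspos : 0 < s := div_pos (by linarith) (by linarith)
  have hsled : s ≤ (d:ℝ) := by
    rw [hs_def, div_le_iff₀ (by linarith : (0:ℝ) < (n:ℝ)-1)]
    nlinarith
  have hlpos : ∀ k, 0 < l k := fun k => dyadic_pos (hldyadic k)
  have hlle1 : ∀ k, l k ≤ 1 := fun k => dyadic_le_one (hldyadic k)
  have hrpos : ∀ k, 1 ≤ k → 0 < r k := fun k hk => dyadic_pos (hrdyadic k hk)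
  have hUmeas : MeasurableSet (unitCube d) := by
    rw [unitCube_eq]; exact cube_measurable _ _
  have hμuniv : μ Set.univ = 1 := by
    rw [← measure_add_measure_compl hUmeas, hμ1, hμ2, add_zero]
  have hμle1 : ∀ A : Set (Fin d → ℝ), μ A ≤ 1 := fun A => by
    rw [← hμuniv]; exact measure_mono (Set.subset_univ A)
  have hlmono : ∀ {j k : ℕ}, j ≤ k → l k ≤ l j := fun {j k} h => hlanti.antitone h
  have hnull : ∀ k, 1 ≤ k → ∀ J, dyadicCube (l k) J ⊆ unitCube d →
      ¬ dyadicCube (l k) J ⊆ X k → μ (dyadicCube (l k) J) = 0 := by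
    intro k hk J hJu hJX
    obtain ⟨N, hN, hNl⟩ := dyadic_ratio (hldyadic k) (hldyadic (k-1)) (hlmono (by omega))
    exact (hμrec k hk J hJu _ (cube_subset_coarse (hlpos k) hN hNl J)).2 hJX
  -- the measure recursion
  have hrec : ∀ k, 1 ≤ k → ∀ c : ℝ≥0∞, (∀ J, μ (dyadicCube (l (k-1)) J) ≤ c) →
      ∀ J, μ (dyadicCube (l k) J) ≤ ENNReal.ofReal (2 * (r k / l (k-1)) ^ d) * c := by
    intro k hk c hc J
    rcases cube_dich (hldyadic k) J with hJu | hJdisj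
    swap
    · have h0 : μ (dyadicCube (l k) J) = 0 := by
        apply measure_mono_null _ hμ2
        intro x hx hxu
        exact absurd (Set.mem_inter hx hxu) (by rw [hJdisj]; exact Set.notMem_empty x)
      rw [h0]; exact zero_le
    obtain ⟨N, hN, hNl⟩ := dyadic_ratio (hldyadic k) (hldyadic (k-1)) (hlmono (by omega))
    set I : Fin d → ℤ := fun i => J i / (N:ℤ) with hIdef
    have hI : dyadicCube (l k) J ⊆ dyadicCube (l (k-1)) I :=
      cube_subset_coarse (hlpos k) hN hNl J
    by_cases hJX : dyadicCube (l k) J ⊆ X k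
    swap
    · rw [hnull k hk J hJu hJX]; exact zero_le
    have heq := (hμrec k hk J hJu I hI).1 hJX
    have hmem : I ∈ cubesMeeting (l (k-1)) (X (k-1)) := by
      obtain ⟨x, hx⟩ := cube_nonempty (hlpos k) J
      have hxk1 : x ∈ X (k-1) := by
        have h1 : X k ⊆ X (k-1) := by
          have h2 := hXmono (k-1)
          rwa [Nat.sub_add_cancel hk] at h2
        exact h1 (hJX hx)
      exact ⟨x, hI hx, hxk1⟩
    have hcount := hXlarge k hk I hmem
    have hhalf : (0:ℝ) < 1/2 * (l (k-1) / r k) ^ d := by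
      have := hrpos k hk; have := hlpos (k-1); positivity
    have hNQ : ENNReal.ofReal (1/2 * (l (k-1) / r k) ^ d) ≤
        ((cubeCount (l k) (X k ∩ dyadicCube (l (k-1)) I)) : ℝ≥0∞) := by
      rw [← ENNReal.ofReal_natCast]
      exact ENNReal.ofReal_le_ofReal hcount
    rw [heq]
    have hinv : (1/2 * (l (k-1) / r k) ^ d)⁻¹ = 2 * (r k / l (k-1)) ^ d := by
      rw [mul_inv, ← inv_pow, inv_div]
      norm_num
    calc μ (dyadicCube (l (k-1)) I) / ((cubeCount (l k) (X k ∩ dyadicCube (l (k-1)) I)) : ℝ≥0∞)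
        ≤ μ (dyadicCube (l (k-1)) I) / ENNReal.ofReal (1/2 * (l (k-1) / r k) ^ d) :=
          ENNReal.div_le_div_left hNQ _
      _ = ENNReal.ofReal ((1/2 * (l (k-1) / r k) ^ d)⁻¹) * μ (dyadicCube (l (k-1)) I) := by
          rw [div_eq_mul_inv, ← ENNReal.ofReal_inv_of_pos hhalf, mul_comm]
      _ = ENNReal.ofReal (2 * (r k / l (k-1)) ^ d) * μ (dyadicCube (l (k-1)) I) := by
          rw [hinv]
      _ ≤ ENNReal.ofReal (2 * (r k / l (k-1)) ^ d) * c := mul_le_mul_right (hc I) _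
  -- level-k bound
  have hB3 : ∀ k, 1 ≤ k → ∀ J, μ (dyadicCube (l k) J) ≤
      ENNReal.ofReal (2 * C₀ ^ d * l k ^ (s - 2 * ε k)) := by
    intro k hk J
    have h := hrec k hk 1 (fun J' => hμle1 _) J
    rw [mul_one] at h
    refine h.trans (ENNReal.ofReal_le_ofReal ?_)
    have hE := realE1 d n hd hn α (ε k) C₀ (l k) (l (k-1)) (r k) (hεpos k) hC₀ (hlpos k)
      (hlle1 k) (hlpos (k-1)) (hrpos k hk) (hlquad k hk) (hrsize k hk)
    rw [hs_def]
    linarith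
  -- Part A
  have partA : ∀ ε' : ℝ, 0 < ε' → ∃ C : ℝ, 0 < C ∧ ∀ l' : ℝ, IsDyadicLength l' →
      ∀ I : Fin d → ℤ, μ (dyadicCube l' I) ≤ ENNReal.ofReal (C * l' ^ (s - ε')) := by
    intro ε' hε'
    by_cases hcase : s ≤ ε'
    · refine ⟨1, one_pos, fun l' hl' I => ?_⟩
      have h1 : (1:ℝ) ≤ l' ^ (s - ε') :=
        Real.one_le_rpow_of_pos_of_le_one_of_nonpos (dyadic_pos hl') (dyadic_le_one hl')
          (by linarith)
      refine (hμle1 _).trans ?_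
      rw [one_mul]
      exact ENNReal.one_le_ofReal.2 h1
    push_neg at hcase
    obtain ⟨K₁, hK₁⟩ := Filter.eventually_atTop.1
      (hεlim.eventually_lt_const (by linarith : (0:ℝ) < ε'/2))
    set K := K₁ + 1 with hKdef
    set C : ℝ := max (4 * C₀ ^ d) (l K ^ (ε' - s)) with hCdef
    have hCpos : 0 < C := lt_max_of_lt_left (by nlinarith [pow_pos hC₀ d])
    refine ⟨C, hCpos, fun l' hl' I => ?_⟩
    have hl'pos := dyadic_pos hl'
    have hl'le1 := dyadic_le_one hl'
    by_cases hll' : l K ≤ l'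
    · refine (hμle1 _).trans ?_
      have h2 : l K ^ (s - ε') ≤ l' ^ (s - ε') :=
        Real.rpow_le_rpow (hlpos K).le hll' (by linarith)
      have h4 : (1:ℝ) ≤ C * l' ^ (s - ε') := by
        calc (1:ℝ) = l K ^ (ε' - s) * l K ^ (s - ε') := by
              rw [← Real.rpow_add (hlpos K)]; norm_num
          _ ≤ C * l' ^ (s - ε') :=
              mul_le_mul (le_max_right _ _) h2 (Real.rpow_nonneg (hlpos K).le _) hCpos.le
      exact ENNReal.one_le_ofReal.2 h4
    push_neg at hll'
    have hex : ∃ k, l k ≤ l' := by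
      obtain ⟨k, hk⟩ := Filter.eventually_atTop.1 (hllim.eventually_lt_const hl'pos)
      exact ⟨k, (hk k le_rfl).le⟩
    set k := Nat.find hex with hkdef
    have hkle : l k ≤ l' := Nat.find_spec hex
    have hkK : K < k := by
      by_contra hcon
      push_neg at hcon
      have := hlmono hcon
      linarith
    have hk1 : 1 ≤ k := by omega
    have hk11 : 1 ≤ k - 1 := by omega
    have hl'lt : l' < l (k-1) := by
      have hmin : ¬ l (k-1) ≤ l' := Nat.find_min hex (m := k-1) (by omega)
      linarith [not_le.1 hmin]
    have hεk : ε k < ε'/2 := hK₁ k (by omega)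
    have hεk1 : ε (k-1) < ε'/2 := hK₁ (k-1) (by omega)
    have hsep' : ∀ m' : Fin d → ℤ, ∀ m₁, (dyadicCube (l k) m₁ ∩ X k).Nonempty →
        ∀ m₂, (dyadicCube (l k) m₂ ∩ X k).Nonempty →
        dyadicCube (l k) m₁ ⊆ dyadicCube (r k) m' →
        dyadicCube (l k) m₂ ⊆ dyadicCube (r k) m' → m₁ = m₂ :=
      fun m' m₁ h₁ m₂ h₂ => hXsep k hk1 m' m₁ h₁ m₂ h₂
    rcases le_total l' (r k) with hc2 | hc2
    · -- at most one cube of X k fits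
      have hcnt := count_one (hldyadic k) (hrdyadic k hk1) hl' (hrlow k hk1) hc2 hsep' I
      have hkey := core (hldyadic k) hl' hkle (hnull k hk1) hμ2 (fun J => hB3 k hk1 J) I 1 hcnt
      refine hkey.trans ?_
      rw [Nat.cast_one, one_mul]
      apply ENNReal.ofReal_le_ofReal
      have hE3 := realE3 d C₀ (l k) l' (ε k) ε' s hC₀ (hlpos k) hkle hl'le1 (hεpos k).le
        (by linarith) (by linarith)
      calc 2 * C₀ ^ d * l k ^ (s - 2 * ε k) ≤ 4 * C₀ ^ d * l' ^ (s - ε') := hE3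
        _ ≤ C * l' ^ (s - ε') :=
            mul_le_mul_of_nonneg_right (le_max_left _ _) (Real.rpow_nonneg hl'pos.le _)
    · -- many cubes
      obtain ⟨N, hN, hNl⟩ := dyadic_ratio (hrdyadic k hk1) hl' hc2
      have hcnt := count_many (hldyadic k) (hrdyadic k hk1) hl' (hrlow k hk1) hsep' I hN hNl
      have hc' : ∀ J, μ (dyadicCube (l k) J) ≤
          ENNReal.ofReal (2 * (r k / l (k-1)) ^ d *
            (2 * C₀ ^ d * l (k-1) ^ (s - 2 * ε (k-1)))) := by
        intro J
        have h := hrec k hk1 _ (fun J' => hB3 (k-1) hk11 J') J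
        refine h.trans ?_
        have hnn : (0:ℝ) ≤ 2 * (r k / l (k-1)) ^ d := by
          have := pow_nonneg (div_nonneg (hrpos k hk1).le (hlpos (k-1)).le) d
          linarith
        rw [← ENNReal.ofReal_mul hnn]
      have hkey := core (hldyadic k) hl' hkle (hnull k hk1) hμ2 hc' I (N ^ d) hcnt
      refine hkey.trans ?_
      have hnn2 : (0:ℝ) ≤ ((N ^ d : ℕ) : ℝ) := Nat.cast_nonneg _
      rw [← ENNReal.ofReal_natCast (N ^ d), ← ENNReal.ofReal_mul hnn2]
      apply ENNReal.ofReal_le_ofReal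
      have hNr : ((N ^ d : ℕ) : ℝ) = (l' / r k) ^ d := by
        rw [hNl]
        push_cast
        rw [mul_div_assoc, div_self (hrpos k hk1).ne', mul_one]
      rw [hNr]
      have hE2 := realE2 d C₀ (l (k-1)) (r k) l' (ε (k-1)) ε' s hC₀ (hrpos k hk1) hl'pos
        hl'lt.le (hlle1 (k-1)) hsled hε' (by linarith) (by linarith)
      calc (l'/r k)^d * (2 * (r k / l (k-1)) ^ d * (2 * C₀ ^ d * l (k-1) ^ (s - 2 * ε (k-1))))
          = (l'/r k)^d * ((r k / l (k-1)) ^ d * (4 * C₀ ^ d * l (k-1) ^ (s - 2 * ε (k-1)))) := by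
            ring
        _ ≤ 4 * C₀ ^ d * l' ^ (s - ε') := hE2
        _ ≤ C * l' ^ (s - ε') :=
            mul_le_mul_of_nonneg_right (le_max_left _ _) (Real.rpow_nonneg hl'pos.le _)
  refine ⟨partA, ?_⟩
  -- Part B : the dimension bound
  have hXmeas : ∀ k, MeasurableSet (X k) := by
    intro k
    obtain ⟨-, S, hS⟩ := hXcube k
    rw [hS]
    exact MeasurableSet.biUnion (Set.to_countable S) (fun m _ => cube_measurable _ _)
  have hXanti : Antitone X := antitone_nat_of_succ_le hXmono
  have hXunit : ∀ k, μ (unitCube d \ X k) = 0 := by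
    intro k
    rcases Nat.eq_zero_or_pos k with rfl | hk
    · rw [hX0]; simp
    · have hcov : unitCube d \ X k ⊆
          ⋃ J : Fin d → ℤ, (dyadicCube (l k) J ∩ (unitCube d \ X k)) := by
        intro x hx
        exact Set.mem_iUnion.2 ⟨idx (l k) x, self_mem_cube (hlpos k) x, hx⟩
      refine measure_mono_null hcov ?_
      rw [measure_iUnion_null_iff]
      intro J
      rcases cube_dich (hldyadic k) J with hJu | hJdisj
      · by_cases hJX : dyadicCube (l k) J ⊆ X k
        · have hempty : dyadicCube (l k) J ∩ (unitCube d \ X k) = ∅ := by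
            ext x
            simp only [Set.mem_inter_iff, Set.mem_diff, Set.mem_empty_iff_false, iff_false,
              not_and, and_imp]
            intro hx _ hnx
            exact hnx (hJX hx)
          rw [hempty, measure_empty]
        · exact measure_mono_null Set.inter_subset_left (hnull k hk J hJu hJX)
      · refine measure_mono_null (fun x hx => ?_) (measure_empty (μ := μ))
        rw [← hJdisj]
        exact ⟨hx.1, hx.2.1⟩
  have hμX : ∀ k, μ (X k) = 1 := by
    intro k
    refine le_antisymm (hμle1 _) ?_
    have h2 : μ (unitCube d) ≤ μ (unitCube d ∩ X k) + μ (unitCube d \ X k) :=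
      measure_le_inter_add_diff _ _ _
    rw [hXunit k, add_zero, hμ1] at h2
    exact h2.trans (measure_mono Set.inter_subset_right)
  have hμiInter : μ (⋂ k, X k) = 1 := by
    rw [Directed.measure_iInter (fun k => (hXmeas k).nullMeasurableSet) hXanti.directed_ge
      ⟨0, by rw [hμX 0]; exact ENNReal.one_ne_top⟩]
    simp [hμX]
  have hdim : ∀ t : ℝ, 0 < t → t < s → ENNReal.ofReal t ≤ dimH (⋂ k, X k) := by
    intro t ht hts
    obtain ⟨C, hCpos, hA⟩ := partA (s - t) (by linarith)
    have hexp : s - (s - t) = t := by ring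
    rw [hexp] at hA
    have hsing : ∀ x : Fin d → ℝ, μ {x} = 0 := by
      intro x
      have hb : ∀ k : ℕ, μ {x} ≤ ENNReal.ofReal (C * l k ^ t) := by
        intro k
        refine le_trans (measure_mono ?_) (hA (l k) (hldyadic k) (idx (l k) x))
        exact Set.singleton_subset_iff.2 (self_mem_cube (hlpos k) x)
      have htd : Tendsto (fun k => ENNReal.ofReal (C * l k ^ t)) atTop (nhds 0) := by
        have h1 : Tendsto (fun k => l k ^ t) atTop (nhds 0) := by
          have hcont : ContinuousAt (fun y : ℝ => y ^ t) 0 :=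
            Real.continuousAt_rpow_const 0 t (Or.inr ht.le)
          have h2 := hcont.tendsto.comp hllim
          rwa [Real.zero_rpow ht.ne'] at h2
        have h2 : Tendsto (fun k => C * l k ^ t) atTop (nhds (C * 0)) := h1.const_mul C
        rw [mul_zero] at h2
        have h3 := (ENNReal.continuous_ofReal.tendsto 0).comp h2
        rwa [ENNReal.ofReal_zero] at h3
      exact le_antisymm (ge_of_tendsto' htd hb) zero_le
    set cC : ℝ≥0∞ := ENNReal.ofReal (5 ^ d * C) with hcCdef
    have hcC0 : cC ≠ 0 := by
      rw [hcCdef]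
      simp only [ne_eq, ENNReal.ofReal_eq_zero, not_le]
      nlinarith [pow_pos (show (0:ℝ) < 5 by norm_num) d, hCpos]
    have hcCtop : cC ≠ ∞ := ENNReal.ofReal_ne_top
    have hfrost : ∀ S : Set (Fin d → ℝ), EMetric.diam S ≤ 1 →
        μ S ≤ cC * EMetric.diam S ^ t := by
      intro S hS
      rcases S.eq_empty_or_nonempty with rfl | ⟨x₀, hx₀⟩
      · simp
      by_cases hD0 : EMetric.diam S = 0
      · have hsub : S.Subsingleton := EMetric.diam_eq_zero_iff.1 hD0
        have hsx : S ⊆ {x₀} := fun y hy => hsub hy hx₀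
        refine le_trans (measure_mono hsx) ?_
        rw [hsing x₀]
        exact zero_le
      · have hDtop : EMetric.diam S ≠ ∞ := (lt_of_le_of_lt hS ENNReal.one_lt_top).ne
        set Dr : ℝ := (EMetric.diam S).toReal with hDrdef
        have hDrpos : 0 < Dr := ENNReal.toReal_pos hD0 hDtop
        have hDr1 : Dr ≤ 1 := by
          have := ENNReal.toReal_mono ENNReal.one_ne_top hS
          rwa [ENNReal.toReal_one] at this
        have hex2 : ∃ k₀ : ℕ, (2:ℝ) ^ (-(k₀:ℤ)) ≤ Dr := by
          obtain ⟨k₀, hk₀⟩ := exists_pow_lt_of_lt_one hDrpos (by norm_num : (1:ℝ)/2 < 1)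
          refine ⟨k₀, le_of_lt ?_⟩
          calc (2:ℝ) ^ (-(k₀:ℤ)) = (1/2)^k₀ := by
                rw [zpow_neg, zpow_natCast, one_div, inv_pow]
            _ < Dr := hk₀
        set k₀ := Nat.find hex2 with hk₀def
        set l'' : ℝ := (2:ℝ) ^ (-(k₀:ℤ)) with hl''def
        have hl''d : IsDyadicLength l'' := ⟨k₀, rfl⟩
        have hl''pos : 0 < l'' := dyadic_pos hl''d
        have hl''le : l'' ≤ Dr := Nat.find_spec hex2
        have hDrle : Dr ≤ 2 * l'' := by
          rcases Nat.eq_zero_or_pos k₀ with h0 | hposk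
          · have : l'' = 1 := by rw [hl''def, h0]; norm_num
            rw [this]; linarith
          · have hmin : ¬ (2:ℝ) ^ (-(((k₀-1):ℕ):ℤ)) ≤ Dr :=
              Nat.find_min hex2 (m := k₀ - 1) (by omega)
            push_neg at hmin
            have hcast : (((k₀-1):ℕ):ℤ) = (k₀:ℤ) - 1 := by omega
            have h2l : (2:ℝ) ^ (-(((k₀-1):ℕ):ℤ)) = 2 * l'' := by
              rw [hcast, hl''def, show -((k₀:ℤ) - 1) = 1 + -(k₀:ℤ) by ring,
                zpow_add₀ (by norm_num : (2:ℝ) ≠ 0), zpow_one]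
            rw [h2l] at hmin
            linarith
        set cI : Fin d → ℤ := idx l'' x₀ with hcIdef
        have hcov : S ⊆ ⋃ m ∈ Fintype.piFinset (fun i => Finset.Icc (cI i - 2) (cI i + 2)),
            dyadicCube l'' m := by
          intro x hx
          refine Set.mem_iUnion₂.2 ⟨idx l'' x, ?_, self_mem_cube hl''pos x⟩
          rw [Fintype.mem_piFinset]
          intro i
          rw [Finset.mem_Icc]
          show cI i - 2 ≤ ⌊x i / l''⌋ ∧ ⌊x i / l''⌋ ≤ cI i + 2
          have hdist : |x i - x₀ i| ≤ 2 * l'' := by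
            have h1 : edist x x₀ ≤ EMetric.diam S := EMetric.edist_le_diam_of_mem hx hx₀
            have h2 : dist x x₀ ≤ Dr := by
              rw [hDrdef, dist_edist]
              exact ENNReal.toReal_mono hDtop h1
            have h3 := (dist_le_pi_dist x x₀ i).trans (h2.trans hDrle)
            rwa [Real.dist_eq] at h3
          have habs := abs_le.1 hdist
          have hfl : (cI i : ℝ) * l'' ≤ x₀ i := by
            have := Int.floor_le (x₀ i / l'')
            rw [hcIdef]
            calc (idx l'' x₀ i : ℝ) * l'' ≤ (x₀ i / l'') * l'' := by
                  apply mul_le_mul_of_nonneg_right this hl''pos.le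
              _ = x₀ i := by field_simp
          have hfu : x₀ i < ((cI i : ℝ) + 1) * l'' := by
            have := Int.lt_floor_add_one (x₀ i / l'')
            rw [hcIdef]
            have h4 : x₀ i / l'' < (idx l'' x₀ i : ℝ) + 1 := this
            calc x₀ i = (x₀ i / l'') * l'' := by field_simp
              _ < ((idx l'' x₀ i : ℝ) + 1) * l'' := by
                  apply mul_lt_mul_of_pos_right h4 hl''pos
          constructor
          · rw [Int.le_floor]
            push_cast
            rw [le_div_iff₀ hl''pos]
            nlinarith
          · have h5 : ⌊x i / l''⌋ < cI i + 3 := by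
              rw [Int.floor_lt]
              push_cast
              rw [div_lt_iff₀ hl''pos]
              nlinarith
            omega
        refine le_trans (measure_mono hcov) ?_
        refine le_trans (measure_biUnion_finset_le _ _) ?_
        have hcard : (Fintype.piFinset (fun i : Fin d => Finset.Icc (cI i - 2) (cI i + 2))).card
            = 5 ^ d := by
          rw [Fintype.card_piFinset]
          have hic : ∀ i : Fin d, (Finset.Icc (cI i - 2) (cI i + 2)).card = 5 := by
            intro i
            rw [Int.card_Icc]
            omega
          simp [hic, Finset.prod_const, Finset.card_univ, Fintype.card_fin]
        have hbound : ∀ m ∈ Fintype.piFinset (fun i : Fin d => Finset.Icc (cI i - 2) (cI i + 2)),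
            μ (dyadicCube l'' m) ≤ ENNReal.ofReal (C * l'' ^ t) := fun m _ => hA l'' hl''d m
        refine le_trans (Finset.sum_le_card_nsmul _ _ _ hbound) ?_
        rw [hcard, nsmul_eq_mul]
        calc (5 ^ d : ℕ) * ENNReal.ofReal (C * l'' ^ t)
            = ENNReal.ofReal ((5:ℝ) ^ d * (C * l'' ^ t)) := by
              rw [← ENNReal.ofReal_natCast (5 ^ d), ← ENNReal.ofReal_mul (by positivity)]
              congr 1
              push_cast
              ring
          _ ≤ ENNReal.ofReal ((5 ^ d * C) * Dr ^ t) := by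
              apply ENNReal.ofReal_le_ofReal
              have hrle : l'' ^ t ≤ Dr ^ t := Real.rpow_le_rpow hl''pos.le hl''le ht.le
              calc (5:ℝ) ^ d * (C * l'' ^ t) = (5 ^ d * C) * l'' ^ t := by ring
                _ ≤ (5 ^ d * C) * Dr ^ t := by
                    apply mul_le_mul_of_nonneg_left hrle (by positivity)
          _ = ENNReal.ofReal (5 ^ d * C) * ENNReal.ofReal (Dr ^ t) :=
              ENNReal.ofReal_mul (by positivity)
          _ = cC * EMetric.diam S ^ t := by
              rw [hcCdef, ← ENNReal.ofReal_rpow_of_pos hDrpos, hDrdef,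
                ENNReal.ofReal_toReal hDtop]
    have hle : cC⁻¹ • μ ≤ μH[t] := by
      apply MeasureTheory.Measure.le_hausdorffMeasure t _ 1 one_pos
      intro S hS
      rw [MeasureTheory.Measure.smul_apply, smul_eq_mul]
      calc cC⁻¹ * μ S ≤ cC⁻¹ * (cC * EMetric.diam S ^ t) := mul_le_mul_right (hfrost S hS) _
        _ = EMetric.diam S ^ t := by
            rw [← mul_assoc, ENNReal.inv_mul_cancel hcC0 hcCtop, one_mul]
    have hH : μH[t] (⋂ k, X k) ≠ 0 := by
      intro h0
      have h1 : (cC⁻¹ • μ) (⋂ k, X k) ≤ μH[t] (⋂ k, X k) := hle _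
      rw [h0, MeasureTheory.Measure.smul_apply, smul_eq_mul, hμiInter, mul_one,
        nonpos_iff_eq_zero, ENNReal.inv_eq_zero] at h1
      exact hcCtop h1
    have ht2 : ((t.toNNReal : ℝ≥0∞)) ≤ dimH (⋂ k, X k) := by
      apply le_dimH_of_hausdorffMeasure_ne_zero
      rwa [Real.coe_toNNReal t ht.le]
    rwa [← ENNReal.ofReal] at ht2
  -- conclude by taking the limit
  have hfin : ∀ m : ℕ, ENNReal.ofReal (s - s/(m+2)) ≤ dimH (⋂ k, X k) := by
    intro m
    have hlt : s/((m:ℝ)+2) < s := by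
      apply div_lt_self hspos
      have : (0:ℝ) ≤ (m:ℝ) := Nat.cast_nonneg m
      linarith
    have hpos : 0 < s/((m:ℝ)+2) := by positivity
    exact hdim _ (by linarith) (by linarith)
  have htt : Tendsto (fun m : ℕ => ENNReal.ofReal (s - s/(m+2))) atTop
      (nhds (ENNReal.ofReal s)) := by
    have h1 : Tendsto (fun m : ℕ => s/((m:ℝ)+2)) atTop (nhds 0) := by
      have h2 := (tendsto_const_div_atTop_nhds_zero_nat s).comp (tendsto_add_atTop_nat 2)
      refine Filter.Tendsto.congr (fun m => ?_) h2
      simp only [Function.comp_apply]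
      push_cast
      ring
    have h2 : Tendsto (fun m : ℕ => s - s/((m:ℝ)+2)) atTop (nhds (s - 0)) :=
      tendsto_const_nhds.sub h1
    rw [sub_zero] at h2
    exact (ENNReal.continuous_ofReal.tendsto s).comp h2
  exact le_of_tendsto htt (Filter.Eventually.of_forall hfin)

end
end
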